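/- arXiv:2311.08332 — 2 statements merged into one kernel-verified Lean document; each statement's English description precedes it below -/
import Mathlib

section
/- Let G be a trivalent, 2-edge-connected finite graph. An inclusion-minimal cycle A ⊆ V(G) is a circuit of the graph curve matroid M_G if and only if removing A does not disconnect G, i.e., G[V−A] is connected (or empty). -/
/-- A finite undirected multigraph on vertex type `V` with edge type `E`:
each edge has an unordered pair of endpoints (possibly a loop). -/
structure Multigraph (V E : Type*) where
  ends : E → Sym2 V

namespace Multigraph

variable {V E : Type*} (G : Multigraph V E)

/-- `δ(A)`: the set of edges incident to at least one vertex of `A`. -/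
def inc (A : Set V) : Set E := {e | ∃ v ∈ A, v ∈ G.ends e}

/-- Number of connected components of the spanning subgraph of `G`
with edge set `B` (on the full vertex set `V`). -/
noncomputable def numComponentsEdges (B : Set E) : ℕ :=
  Nat.card (Quot (fun u v : V => ∃ e ∈ B, G.ends e = s(u, v)))

/-- Number of connected components `ω(S)` of the subgraph of `G` induced on `S`. -/
noncomputable def numComponentsSub (S : Set V) : ℕ :=
  Nat.card (Quot (fun x y : S => ∃ e, G.ends e = s(x.1, y.1)))

/-- Rank function of the cycle (graphic) matroid of `G`:
`r(B) = |V| - (number of components of (V, B))`. -/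
noncomputable def cycleRank (B : Set E) : ℕ :=
  Nat.card V - G.numComponentsEdges B

/-- Rank function `r*` of the bond (cographic) matroid of `G`:
`r*(B) = |B| + r(E - B) - r(E)`. -/
noncomputable def bondRank (B : Set E) : ℕ :=
  B.ncard + G.cycleRank Bᶜ - G.cycleRank Set.univ

/-- `G` is connected. -/
def Connected : Prop := G.numComponentsEdges Set.univ = 1

/-- `G` is 2-edge-connected: it is connected and deleting any single edge
leaves it connected. -/
def TwoEdgeConnected : Prop :=
  G.Connected ∧ ∀ e : E, G.numComponentsEdges {e}ᶜ = 1

/-- `G` is 2-vertex-connected: it is connected and deleting any single vertex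
leaves it connected. -/
def TwoVertexConnected : Prop :=
  G.Connected ∧ ∀ v : V, G.numComponentsSub {v}ᶜ = 1

/-- `G` has no loops. -/
def Loopless : Prop := ∀ e : E, ¬ (G.ends e).IsDiag

open Classical in
/-- The degree of a vertex, with loops counting twice. -/
noncomputable def degree [Fintype E] (v : V) : ℕ :=
  ∑ e : E, (if G.ends e = s(v, v) then 2 else if v ∈ G.ends e then 1 else 0)

/-- `G` is trivalent: every vertex has degree `3`. -/
def Trivalent [Fintype E] : Prop := ∀ v : V, G.degree v = 3

/-- `A ⊆ V` is the vertex set of a cycle `v₁, …, vₙ, v₁` of `G`: there are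
pairwise distinct vertices `f 0, …, f (n-1)` with range `A` and pairwise
distinct edges joining cyclically consecutive vertices. -/
def IsCycleSet (A : Set V) : Prop :=
  ∃ n : ℕ, 0 < n ∧ ∃ f : ZMod n → V, Function.Injective f ∧ Set.range f = A ∧
    ∃ e : ZMod n → E, Function.Injective e ∧ ∀ i, G.ends (e i) = s(f i, f (i + 1))

/-- The subgraph induced on `A` contains a cycle. -/
def Cyclic (A : Set V) : Prop := ∃ C ⊆ A, G.IsCycleSet C

/-- The subgraph induced on `A` is acyclic (a forest). -/
def Acyclic (A : Set V) : Prop := ¬ G.Cyclic A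

/-- `A` is a circuit of the graph curve matroid `M_G`: `A` is nonempty,
`r*(δ(A)) ≤ |A|`, and no proper nonempty subset `A'` satisfies `r*(δ(A')) ≤ |A'|`. -/
noncomputable def IsCircuitMG (A : Set V) : Prop :=
  A.Nonempty ∧ G.bondRank (G.inc A) ≤ A.ncard ∧
    ∀ A' : Set V, A' ⊂ A → A'.Nonempty → A'.ncard < G.bondRank (G.inc A')

/-- `A` is dependent in the graph curve matroid `M_G`, i.e. contains a circuit. -/
noncomputable def DepMG (A : Set V) : Prop := ∃ C ⊆ A, G.IsCircuitMG C

/-- `A` is independent in the graph curve matroid `M_G`. -/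
noncomputable def IndepMG (A : Set V) : Prop := ¬ G.DepMG A

/-- The rank function of the graph curve matroid `M_G`:
the maximal cardinality of an independent subset. -/
noncomputable def rankMG (A : Set V) : ℕ :=
  sSup {n | ∃ I ⊆ A, G.IndepMG I ∧ I.ncard = n}

/-- `B` is a basis of the graph curve matroid `M_G`:
a maximal independent set. -/
noncomputable def IsBasisMG (B : Set V) : Prop :=
  G.IndepMG B ∧ ∀ I : Set V, G.IndepMG I → B ⊆ I → I = B

end Multigraph

/-! ### Auxiliary machinery -/

namespace MGAux

open Relation Function

variable {V E : Type*} (G : Multigraph V E)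

/-- Edges internal to `S` : all endpoints in `S`. -/
def intE (S : Set V) : Set E := {g : E | ∀ x ∈ G.ends g, x ∈ S}

/-- The relation used in `numComponentsSub`. -/
abbrev srel (S : Set V) : S → S → Prop := fun x y => ∃ e, G.ends e = s(x.1, y.1)

lemma ncs_def (S : Set V) : G.numComponentsSub S = Nat.card (Quot (srel G S)) := rfl

variable {G}

lemma eqvGen_iff_of_invariant {α : Type*} {r : α → α → Prop} (P : α → Prop)
    (h : ∀ a b, r a b → (P a ↔ P b)) {a b : α} (hab : EqvGen r a b) : P a ↔ P b := by
  induction hab with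
  | rel x y hxy => exact h x y hxy
  | refl => exact Iff.rfl
  | symm x y _ ih => exact ih.symm
  | trans x y z _ _ ih1 ih2 => exact ih1.trans ih2

lemma eqvGen_subset {S T : Set V} (hST : S ⊆ T) {x y : S}
    (h : EqvGen (srel G S) x y) :
    EqvGen (srel G T) ⟨x.1, hST x.2⟩ ⟨y.1, hST y.2⟩ := by
  induction h with
  | rel a b hab => exact .rel _ _ hab
  | refl a => exact .refl _
  | symm a b _ ih => exact .symm _ _ ih
  | trans a b c _ _ ih1 ih2 => exact .trans _ _ _ ih1 ih2

lemma connected_no_crossing [Finite V] (hconn : G.Connected) {S : Set V}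
    (hS : S.Nonempty) (hSc : Sᶜ.Nonempty)
    (hcross : ∀ h : E, ∀ x y : V, G.ends h = s(x, y) → x ∈ S → y ∈ S) : False := by
  obtain ⟨x₀, hx₀⟩ := hS
  obtain ⟨y₀, hy₀⟩ := hSc
  have hconn' : Nat.card (Quot (fun u v : V => ∃ e ∈ (Set.univ : Set E), G.ends e = s(u, v))) = 1 :=
    hconn
  have hsub : Subsingleton (Quot (fun u v : V => ∃ e ∈ (Set.univ : Set E), G.ends e = s(u, v))) :=
    (Nat.card_eq_one_iff_unique.mp hconn').1
  have h1 : Quot.mk (fun u v : V => ∃ e ∈ (Set.univ : Set E), G.ends e = s(u, v)) x₀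
      = Quot.mk _ y₀ := Subsingleton.elim _ _
  have h2 := Quot.eqvGen_exact h1
  have h3 := eqvGen_iff_of_invariant (· ∈ S)
    (by rintro a b ⟨e, -, hends⟩
        exact ⟨fun ha => hcross e a b hends ha,
               fun hb => hcross e b a (Sym2.eq_swap ▸ hends) hb⟩) h2
  exact hy₀ (h3.mp hx₀)

lemma nce_pos [Finite V] [Nonempty V] (B : Set E) : 1 ≤ G.numComponentsEdges B := by
  have : Nonempty (Quot (fun u v : V => ∃ e ∈ B, G.ends e = s(u, v))) :=
    Nonempty.map (Quot.mk _) ‹Nonempty V›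
  exact Nat.card_pos

lemma nce_le_card [Finite V] (B : Set E) : G.numComponentsEdges B ≤ Nat.card V :=
  Nat.card_le_card_of_surjective _ Quot.mk_surjective

open Classical in
lemma degree_def [Fintype E] (v : V) :
    G.degree v
      = ∑ g : E, (if G.ends g = s(v, v) then 2 else if v ∈ G.ends g then 1 else 0) := rfl

section Degree
variable [Fintype E]

lemma card_le_degree (v : V) (t : Finset E) (ht : ∀ g ∈ t, v ∈ G.ends g) :
    t.card ≤ G.degree v := by
  classical
  rw [degree_def]
  calc t.card = ∑ _g ∈ t, 1 := by simp
    _ ≤ ∑ g ∈ t, (if G.ends g = s(v, v) then 2 else if v ∈ G.ends g then 1 else 0) := by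
        refine Finset.sum_le_sum fun g hg => ?_
        split_ifs with h1 h2
        · omega
        · omega
        · exact absurd (ht g hg) h2
    _ ≤ _ := Finset.sum_le_sum_of_subset (Finset.subset_univ t)

lemma card_succ_le_degree (v : V) (t : Finset E) (ht : ∀ g ∈ t, v ∈ G.ends g)
    {g₀ : E} (hg₀ : g₀ ∈ t) (hloop : G.ends g₀ = s(v, v)) : t.card + 1 ≤ G.degree v := by
  classical
  rw [degree_def]
  have hpos : 1 ≤ t.card := Finset.card_pos.mpr ⟨g₀, hg₀⟩
  have herase : (t.erase g₀).card ≤ ∑ g ∈ t.erase g₀,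
      (if G.ends g = s(v, v) then 2 else if v ∈ G.ends g then 1 else 0) := by
    calc (t.erase g₀).card = ∑ _g ∈ t.erase g₀, 1 := by simp
      _ ≤ _ := by
          refine Finset.sum_le_sum fun g hg => ?_
          split_ifs with h1 h2
          · omega
          · omega
          · exact absurd (ht g (Finset.mem_of_mem_erase hg)) h2
  have hsum : ∑ g ∈ t, (if G.ends g = s(v, v) then 2 else if v ∈ G.ends g then 1 else 0)
      = (if G.ends g₀ = s(v, v) then 2 else if v ∈ G.ends g₀ then 1 else 0)
        + ∑ g ∈ t.erase g₀, (if G.ends g = s(v, v) then 2 else if v ∈ G.ends g then 1 else 0) :=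
    (Finset.add_sum_erase t _ hg₀).symm
  have hle : ∑ g ∈ t, (if G.ends g = s(v, v) then 2 else if v ∈ G.ends g then 1 else 0)
      ≤ ∑ g : E, (if G.ends g = s(v, v) then 2 else if v ∈ G.ends g then 1 else 0) :=
    Finset.sum_le_sum_of_subset (Finset.subset_univ t)
  have hcard : (t.erase g₀).card = t.card - 1 := Finset.card_erase_of_mem hg₀
  rw [if_pos hloop] at hsum
  omega

lemma exists_third (h3 : G.Trivalent) (v : V) {a b : E} (hab : a ≠ b)
    (hva : v ∈ G.ends a) (hvb : v ∈ G.ends b)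
    (hna : G.ends a ≠ s(v, v)) (hnb : G.ends b ≠ s(v, v)) :
    ∃ g, v ∈ G.ends g ∧ g ≠ a ∧ g ≠ b := by
  classical
  by_contra hc
  push_neg at hc
  have h30 := h3 v
  rw [degree_def] at h30
  have hz : ∀ g ∈ (Finset.univ : Finset E), g ∉ ({a, b} : Finset E) →
      (if G.ends g = s(v, v) then 2 else if v ∈ G.ends g then 1 else 0) = 0 := by
    intro g _ hg
    simp only [Finset.mem_insert, Finset.mem_singleton, not_or] at hg
    rw [if_neg, if_neg]
    · intro hvm; exact hg.2 (hc g hvm hg.1)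
    · intro hl
      exact hg.2 (hc g (by rw [hl]; exact Sym2.mem_mk_left v v) hg.1)
  have hs := Finset.sum_subset (Finset.subset_univ ({a, b} : Finset E)) hz
  rw [← hs, Finset.sum_pair hab, if_neg hna, if_neg hnb, if_pos hva, if_pos hvb] at h30
  omega

lemma not_trivalent_loops (h3 : G.Trivalent) (v : V)
    (hall : ∀ g : E, G.ends g = s(v, v)) : False := by
  classical
  have h30 := h3 v
  rw [degree_def, Finset.sum_congr rfl (fun g _ => if_pos (hall g)),
    Finset.sum_const, smul_eq_mul] at h30
  omega

lemma not_two_loops (h3 : G.Trivalent) (v : V) {g₁ g₂ : E} (h12 : g₁ ≠ g₂)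
    (hl1 : G.ends g₁ = s(v, v)) (hl2 : G.ends g₂ = s(v, v)) : False := by
  classical
  have h30 := h3 v
  rw [degree_def] at h30
  have hle : ∑ g ∈ ({g₁, g₂} : Finset E),
      (if G.ends g = s(v, v) then 2 else if v ∈ G.ends g then 1 else 0)
      ≤ ∑ g : E, (if G.ends g = s(v, v) then 2 else if v ∈ G.ends g then 1 else 0) :=
    Finset.sum_le_sum_of_subset (Finset.subset_univ _)
  rw [Finset.sum_pair h12, if_pos hl1, if_pos hl2] at hle
  omega

end Degree

section Counting

lemma comp_split [Finite V] (S : Set V) :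
    G.numComponentsEdges (G.inc S)ᶜ = S.ncard + G.numComponentsSub Sᶜ := by
  classical
  let r : V → V → Prop := fun u v => ∃ e ∈ (G.inc S)ᶜ, G.ends e = s(u, v)
  let r' : (Sᶜ : Set V) → (Sᶜ : Set V) → Prop := fun x y => ∃ e, G.ends e = s(x.1, y.1)
  have key : ∀ u v, r u v → u ∉ S ∧ v ∉ S := by
    rintro u v ⟨e, he, hends⟩
    constructor <;> intro hmem <;> apply he
    · exact ⟨u, hmem, by rw [hends]; exact Sym2.mem_mk_left u v⟩
    · exact ⟨v, hmem, by rw [hends]; exact Sym2.mem_mk_right u v⟩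
  let φ : Quot r → (S : Set V) ⊕ Quot r' := Quot.lift
    (fun v => if h : v ∈ S then Sum.inl ⟨v, h⟩ else Sum.inr (Quot.mk r' ⟨v, h⟩))
    (by intro u v huv
        obtain ⟨hu, hv⟩ := key _ _ huv
        show (if h : u ∈ S then Sum.inl (⟨u, h⟩ : (S : Set V)) else Sum.inr (Quot.mk r' ⟨u, h⟩))
          = (if h : v ∈ S then Sum.inl (⟨v, h⟩ : (S : Set V)) else Sum.inr (Quot.mk r' ⟨v, h⟩))
        rw [dif_neg hu, dif_neg hv]
        refine congrArg _ (Quot.sound ?_)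
        obtain ⟨e, _, hends⟩ := huv
        exact ⟨e, hends⟩)
  let ψ : (S : Set V) ⊕ Quot r' → Quot r :=
    Sum.elim (fun x => Quot.mk r x.1)
      (Quot.lift (fun x => Quot.mk r x.1)
        (by rintro x y ⟨e, hends⟩
            refine Quot.sound ⟨e, fun hmem => ?_, hends⟩
            obtain ⟨v, hvS, hv⟩ := hmem
            rw [hends] at hv
            rcases Sym2.mem_iff.mp hv with h | h
            · exact x.2 (h ▸ hvS)
            · exact y.2 (h ▸ hvS)))
  have hψφ : ∀ q, ψ (φ q) = q := by
    refine Quot.ind fun v => ?_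
    by_cases h : v ∈ S
    · show ψ (if h : v ∈ S then Sum.inl (⟨v, h⟩ : (S : Set V)) else Sum.inr (Quot.mk r' ⟨v, h⟩))
        = Quot.mk r v
      rw [dif_pos h]
      rfl
    · show ψ (if h : v ∈ S then Sum.inl (⟨v, h⟩ : (S : Set V)) else Sum.inr (Quot.mk r' ⟨v, h⟩))
        = Quot.mk r v
      rw [dif_neg h]
      rfl
  have hφψ : ∀ x, φ (ψ x) = x := by
    rintro (x | q)
    · show (if h : x.1 ∈ S then Sum.inl (⟨x.1, h⟩ : (S : Set V)) else Sum.inr (Quot.mk r' ⟨x.1, h⟩))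
        = Sum.inl x
      rw [dif_pos x.2]
    · induction q using Quot.ind with
      | _ x =>
        show (if h : x.1 ∈ S then Sum.inl (⟨x.1, h⟩ : (S : Set V)) else Sum.inr (Quot.mk r' ⟨x.1, h⟩))
          = Sum.inr (Quot.mk r' x)
        rw [dif_neg x.2]
  have hcard : Nat.card (Quot r) = Nat.card ((S : Set V) ⊕ Quot r') :=
    Nat.card_congr ⟨φ, ψ, hψφ, hφψ⟩
  have : G.numComponentsEdges (G.inc S)ᶜ = Nat.card (Quot r) := rfl
  rw [this, hcard, Nat.card_sum, Nat.card_coe_set_eq, ncs_def]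

lemma handshake [Fintype V] [Fintype E] (h3 : G.Trivalent) (S : Set V) :
    (G.inc S).ncard + (intE G S).ncard = 3 * S.ncard := by
  classical
  have hdeg : ∑ v ∈ S.toFinset, G.degree v = 3 * S.ncard := by
    rw [Finset.sum_congr rfl (fun v _ => h3 v), Finset.sum_const, smul_eq_mul,
      Set.ncard_eq_toFinset_card' S]
    ring
  have hswap : ∑ v ∈ S.toFinset, G.degree v
      = ∑ g : E, ∑ v ∈ S.toFinset,
          (if G.ends g = s(v, v) then 2 else if v ∈ G.ends g then 1 else 0) := by
    rw [Finset.sum_congr rfl (fun v _ => degree_def (G := G) v)]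
    exact Finset.sum_comm
  have hper : ∀ g : E, ∑ v ∈ S.toFinset,
      (if G.ends g = s(v, v) then 2 else if v ∈ G.ends g then 1 else 0)
      = (if g ∈ G.inc S then 1 else 0) + (if g ∈ intE G S then 1 else 0) := by
    intro g
    obtain ⟨u, w, hends⟩ : ∃ u w, G.ends g = s(u, w) :=
      ⟨(G.ends g).out.1, (G.ends g).out.2, ((G.ends g).out_eq.symm)⟩
    have hmemu : u ∈ G.ends g := by rw [hends]; exact Sym2.mem_mk_left u w
    have hmemw : w ∈ G.ends g := by rw [hends]; exact Sym2.mem_mk_right u w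
    by_cases huw : u = w
    · subst huw
      have h1 : ∀ v ∈ S.toFinset,
          (if G.ends g = s(v, v) then 2 else if v ∈ G.ends g then 1 else 0)
          = (if v = u then 2 else 0) := by
        intro v _
        by_cases hvu : v = u
        · subst hvu; rw [if_pos hends, if_pos rfl]
        · rw [if_neg, if_neg, if_neg hvu]
          · intro hmem
            rw [hends] at hmem
            rcases Sym2.mem_iff.mp hmem with h | h <;> exact hvu h
          · intro hl
            rw [hends] at hl
            rcases Sym2.eq_iff.mp hl with ⟨h, -⟩ | ⟨h, -⟩ <;> exact hvu h.symm
      rw [Finset.sum_congr rfl h1, Finset.sum_ite_eq' S.toFinset u (fun _ => 2)]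
      have hinc : g ∈ G.inc S ↔ u ∈ S := by
        constructor
        · rintro ⟨v, hvS, hv⟩
          rw [hends] at hv
          rcases Sym2.mem_iff.mp hv with h | h <;> exact h ▸ hvS
        · intro h; exact ⟨u, h, hmemu⟩
      have hint : g ∈ intE G S ↔ u ∈ S := by
        constructor
        · intro h; exact h u hmemu
        · intro h x hx
          rw [hends] at hx
          rcases Sym2.mem_iff.mp hx with hh | hh <;> exact hh ▸ h
      by_cases hu : u ∈ S
      · rw [if_pos (Set.mem_toFinset.mpr hu), if_pos (hinc.mpr hu), if_pos (hint.mpr hu)]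
      · rw [if_neg (fun hc => hu (Set.mem_toFinset.mp hc)), if_neg (fun hc => hu (hinc.mp hc)),
          if_neg (fun hc => hu (hint.mp hc))]
        omega
    · have h1 : ∀ v ∈ S.toFinset,
          (if G.ends g = s(v, v) then 2 else if v ∈ G.ends g then 1 else 0)
          = (if v = u then 1 else 0) + (if v = w then 1 else 0) := by
        intro v _
        have hnl : G.ends g ≠ s(v, v) := by
          rw [hends]
          intro hl
          rcases Sym2.eq_iff.mp hl with ⟨h1', h2'⟩ | ⟨h1', h2'⟩ <;> exact huw (h1'.trans h2'.symm)
        rw [if_neg hnl]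
        by_cases hvu : v = u
        · subst hvu
          rw [if_pos hmemu, if_pos rfl, if_neg huw]
        · by_cases hvw : v = w
          · subst hvw
            rw [if_pos hmemw, if_neg hvu, if_pos rfl]
          · rw [if_neg, if_neg hvu, if_neg hvw]
            intro hmem
            rw [hends] at hmem
            rcases Sym2.mem_iff.mp hmem with h | h
            · exact hvu h
            · exact hvw h
      rw [Finset.sum_congr rfl h1, Finset.sum_add_distrib,
        Finset.sum_ite_eq' S.toFinset u (fun _ => 1), Finset.sum_ite_eq' S.toFinset w (fun _ => 1)]
      have hinc : g ∈ G.inc S ↔ (u ∈ S ∨ w ∈ S) := by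
        constructor
        · rintro ⟨v, hvS, hv⟩
          rw [hends] at hv
          rcases Sym2.mem_iff.mp hv with h | h
          · exact Or.inl (h ▸ hvS)
          · exact Or.inr (h ▸ hvS)
        · rintro (h | h)
          · exact ⟨u, h, hmemu⟩
          · exact ⟨w, h, hmemw⟩
      have hint : g ∈ intE G S ↔ (u ∈ S ∧ w ∈ S) := by
        constructor
        · intro h; exact ⟨h u hmemu, h w hmemw⟩
        · rintro ⟨h1', h2'⟩ x hx
          rw [hends] at hx
          rcases Sym2.mem_iff.mp hx with hh | hh
          · exact hh ▸ h1'
          · exact hh ▸ h2'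
      by_cases hu : u ∈ S <;> by_cases hw : w ∈ S <;>
        simp [hinc, hint, hu, hw, Set.mem_toFinset]
  have hcount : ∀ (T : Set E), T.ncard = ∑ g : E, (if g ∈ T then 1 else 0) := by
    intro T
    calc T.ncard = ∑ _g ∈ T.toFinset, 1 := by
          rw [Set.ncard_eq_toFinset_card' T, Finset.card_eq_sum_ones]
      _ = ∑ g ∈ T.toFinset, (if g ∈ T then 1 else 0) :=
          Finset.sum_congr rfl fun g hg => (if_pos (Set.mem_toFinset.mp hg)).symm
      _ = ∑ g : E, (if g ∈ T then 1 else 0) :=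
          Finset.sum_subset (Finset.subset_univ _) fun g _ hg =>
            if_neg (fun hc => hg (Set.mem_toFinset.mpr hc))
  rw [hswap, Finset.sum_congr rfl (fun g _ => hper g), Finset.sum_add_distrib] at hdeg
  rw [hcount (G.inc S), hcount (intE G S)]
  exact hdeg

lemma bondRank_eq [Fintype V] [Fintype E] (hconn : G.Connected) (S : Set V) :
    G.bondRank (G.inc S)
      = (G.inc S).ncard + (Nat.card V - G.numComponentsEdges (G.inc S)ᶜ) - (Nat.card V - 1) := by
  have hconn' : G.numComponentsEdges Set.univ = 1 := hconn
  unfold Multigraph.bondRank Multigraph.cycleRank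
  rw [hconn']

lemma bondRank_le_iff [Fintype V] [Fintype E] (h3 : G.Trivalent) (hconn : G.Connected)
    [Nonempty V] (S : Set V) :
    G.bondRank (G.inc S) ≤ S.ncard ↔
      S.ncard + 1 ≤ (intE G S).ncard + G.numComponentsSub Sᶜ := by
  have hhs := handshake h3 S
  have hcs := comp_split (G := G) S
  have h1 : 1 ≤ G.numComponentsEdges (G.inc S)ᶜ := nce_pos _
  have hle : G.numComponentsEdges (G.inc S)ᶜ ≤ Nat.card V := nce_le_card _
  have hsn : S.ncard ≤ Nat.card V := by
    rw [← Set.ncard_univ]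
    exact Set.ncard_le_ncard (Set.subset_univ S) Set.finite_univ
  have hV : 0 < Nat.card V := Nat.card_pos
  rw [bondRank_eq hconn]
  omega

lemma bondRank_gt_iff [Fintype V] [Fintype E] (h3 : G.Trivalent) (hconn : G.Connected)
    [Nonempty V] (S : Set V) :
    S.ncard < G.bondRank (G.inc S) ↔
      (intE G S).ncard + G.numComponentsSub Sᶜ ≤ S.ncard := by
  have hhs := handshake h3 S
  have hcs := comp_split (G := G) S
  have h1 : 1 ≤ G.numComponentsEdges (G.inc S)ᶜ := nce_pos _
  have hle : G.numComponentsEdges (G.inc S)ᶜ ≤ Nat.card V := nce_le_card _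
  have hsn : S.ncard ≤ Nat.card V := by
    rw [← Set.ncard_univ]
    exact Set.ncard_le_ncard (Set.subset_univ S) Set.finite_univ
  have hV : 0 < Nat.card V := Nat.card_pos
  rw [bondRank_eq hconn]
  omega

end Counting

section Cycle

variable {n : ℕ} {f : ZMod n → V} {e : ZMod n → E}

lemma zmod_one_ne_zero (hn2 : 2 ≤ n) : (1 : ZMod n) ≠ 0 := by
  intro hc
  have h2 := (ZMod.natCast_eq_zero_iff 1 n).mp (by exact_mod_cast hc)
  have := Nat.le_of_dvd one_pos h2
  omega

lemma zmod_add_one_ne (hn2 : 2 ≤ n) (i : ZMod n) : i + 1 ≠ i := by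
  intro hc
  apply zmod_one_ne_zero hn2
  have : i + 1 = i + 0 := by rw [add_zero]; exact hc
  exact add_left_cancel this

lemma cycle_edge_incident (hf : Function.Injective f)
    (hee : ∀ i, G.ends (e i) = s(f i, f (i + 1)))
    {i j : ZMod n} (h : f i ∈ G.ends (e j)) : j = i ∨ j + 1 = i := by
  rw [hee] at h
  rcases Sym2.mem_iff.mp h with h' | h'
  · exact Or.inl (hf h').symm
  · exact Or.inr (hf h').symm

lemma exists_third_at [Fintype E] (h3 : G.Trivalent) (hn2 : 2 ≤ n)
    (hf : Function.Injective f) (he : Function.Injective e)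
    (hee : ∀ i, G.ends (e i) = s(f i, f (i + 1))) (i : ZMod n) :
    ∃ g, f i ∈ G.ends g ∧ ∀ j, g ≠ e j := by
  have hsub : i - 1 + 1 = i := sub_add_cancel i 1
  have hine : i - 1 ≠ i := by
    intro hc
    have : i = i + 1 := by
      conv_lhs => rw [← hsub, hc]
    exact zmod_add_one_ne hn2 i this.symm
  have hene : e (i - 1) ≠ e i := fun hc => hine (he hc)
  have hmem1 : f i ∈ G.ends (e (i - 1)) := by
    rw [hee, hsub]; exact Sym2.mem_mk_right _ _
  have hmem2 : f i ∈ G.ends (e i) := by rw [hee]; exact Sym2.mem_mk_left _ _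
  have hnl1 : G.ends (e (i - 1)) ≠ s(f i, f i) := by
    rw [hee, hsub]
    intro hc
    rcases Sym2.eq_iff.mp hc with ⟨hc1, -⟩ | ⟨hc1, -⟩ <;> exact hine (hf hc1)
  have hnl2 : G.ends (e i) ≠ s(f i, f i) := by
    rw [hee]
    intro hc
    rcases Sym2.eq_iff.mp hc with ⟨-, hc1⟩ | ⟨-, hc1⟩ <;>
      exact zmod_add_one_ne hn2 i (hf hc1)
  obtain ⟨g, hgmem, hga, hgb⟩ := exists_third h3 (f i) hene hmem1 hmem2 hnl1 hnl2
  refine ⟨g, hgmem, fun j hj => ?_⟩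
  rcases cycle_edge_incident hf hee (hj ▸ hgmem) with h | h
  · exact hgb (by rw [hj, h])
  · exact hga (by rw [hj, eq_sub_of_add_eq h])

lemma third_unique [Fintype E] (h3 : G.Trivalent) (hn : 0 < n)
    (hf : Function.Injective f) (he : Function.Injective e)
    (hee : ∀ i, G.ends (e i) = s(f i, f (i + 1))) (i : ZMod n) {g₁ g₂ : E}
    (h1 : f i ∈ G.ends g₁) (h2 : f i ∈ G.ends g₂)
    (hne1 : ∀ j, g₁ ≠ e j) (hne2 : ∀ j, g₂ ≠ e j) : g₁ = g₂ := by
  classical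
  by_contra hg
  have hmei : f i ∈ G.ends (e i) := by rw [hee]; exact Sym2.mem_mk_left _ _
  have hmei1 : f i ∈ G.ends (e (i - 1)) := by
    rw [hee, sub_add_cancel]; exact Sym2.mem_mk_right _ _
  by_cases hloop : e (i - 1) = e i
  · have hii : i - 1 = i := he hloop
    have hii1 : i + 1 = i := by
      conv_lhs => rw [← hii]
      exact sub_add_cancel i 1
    have hloopi : G.ends (e i) = s(f i, f i) := by rw [hee, hii1]
    have hm1 : g₁ ∉ ({g₂, e i} : Finset E) := by
      simp only [Finset.mem_insert, Finset.mem_singleton, not_or]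
      exact ⟨hg, hne1 i⟩
    have hm2 : g₂ ∉ ({e i} : Finset E) := by
      simp only [Finset.mem_singleton]; exact hne2 i
    have hcard : ({g₁, g₂, e i} : Finset E).card = 3 := by
      rw [Finset.card_insert_of_notMem hm1, Finset.card_insert_of_notMem hm2,
        Finset.card_singleton]
    have hmemall : ∀ g ∈ ({g₁, g₂, e i} : Finset E), f i ∈ G.ends g := by
      intro g hgm
      simp only [Finset.mem_insert, Finset.mem_singleton] at hgm
      rcases hgm with rfl | rfl | rfl
      exacts [h1, h2, hmei]
    have h4 := card_succ_le_degree (G := G) (f i) {g₁, g₂, e i} hmemall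
      (by simp : e i ∈ ({g₁, g₂, e i} : Finset E)) hloopi
    rw [hcard, h3 (f i)] at h4
    omega
  · have hm1 : g₁ ∉ ({g₂, e (i - 1), e i} : Finset E) := by
      simp only [Finset.mem_insert, Finset.mem_singleton, not_or]
      exact ⟨hg, hne1 _, hne1 _⟩
    have hm2 : g₂ ∉ ({e (i - 1), e i} : Finset E) := by
      simp only [Finset.mem_insert, Finset.mem_singleton, not_or]
      exact ⟨hne2 _, hne2 _⟩
    have hcard : ({g₁, g₂, e (i - 1), e i} : Finset E).card = 4 := by
      rw [Finset.card_insert_of_notMem hm1, Finset.card_insert_of_notMem hm2,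
        Finset.card_pair hloop]
    have hmemall : ∀ g ∈ ({g₁, g₂, e (i - 1), e i} : Finset E), f i ∈ G.ends g := by
      intro g hgm
      simp only [Finset.mem_insert, Finset.mem_singleton] at hgm
      rcases hgm with rfl | rfl | rfl | rfl
      exacts [h1, h2, hmei1, hmei]
    have h4 := card_le_degree (G := G) (f i) _ hmemall
    rw [hcard, h3 (f i)] at h4
    omega

lemma no_loop_in_range (hn2 : 2 ≤ n) (hf : Function.Injective f)
    (hmin : ∀ B ⊂ Set.range f, ¬ G.IsCycleSet B) {g : E} {v : V}
    (hg : G.ends g = s(v, v)) (hv : v ∈ Set.range f) : False := by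
  obtain ⟨i₀, rfl⟩ := hv
  haveI : Subsingleton (ZMod 1) := inferInstanceAs (Subsingleton (Fin 1))
  apply hmin {f i₀} ?_ ⟨1, one_pos, fun _ => f i₀,
    fun a b _ => Subsingleton.elim a b, Set.range_const,
    fun _ => g, fun a b _ => Subsingleton.elim a b, fun _ => hg⟩
  rw [Set.ssubset_iff_subset_ne]
  constructor
  · exact Set.singleton_subset_iff.mpr ⟨i₀, rfl⟩
  · intro hc
    have : f (i₀ + 1) ∈ ({f i₀} : Set V) := by rw [hc]; exact ⟨i₀ + 1, rfl⟩
    exact zmod_add_one_ne hn2 i₀ (hf (Set.mem_singleton_iff.mp this))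

lemma chord_helper (hmin : ∀ B ⊂ Set.range f, ¬ G.IsCycleSet B) (hn3 : 3 ≤ n)
    (hf : Function.Injective f) (he : Function.Injective e)
    (hee : ∀ i, G.ends (e i) = s(f i, f (i + 1)))
    {g : E} (hgr : ∀ j, g ≠ e j) {i j : ZMod n}
    (hge : G.ends g = s(f i, f j)) (hk : (j - i).val + 2 ≤ n) : False := by
  haveI : NeZero n := ⟨by omega⟩
  have hkj : i + (((j - i).val : ℕ) : ZMod n) = j := by
    rw [ZMod.natCast_zmod_val]
    ring
  set k : ℕ := (j - i).val with hkdef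
  set m : ℕ := k + 1 with hmdef
  haveI : NeZero m := ⟨by omega⟩
  have hmn : m + 1 ≤ n := by omega
  have hval : ∀ t : ZMod m, t.val < m := fun t => ZMod.val_lt t
  have hcast : ∀ t : ZMod m, ((t.val : ZMod n)).val = t.val :=
    fun t => ZMod.val_cast_of_lt (by have := hval t; omega)
  have hvaleq : ∀ t₁ t₂ : ZMod m, t₁.val = t₂.val → t₁ = t₂ := by
    intro t₁ t₂ h4
    calc t₁ = ((t₁.val : ℕ) : ZMod m) := (ZMod.natCast_zmod_val t₁).symm
      _ = ((t₂.val : ℕ) : ZMod m) := by rw [h4]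
      _ = t₂ := ZMod.natCast_zmod_val t₂
  have hfinj : ∀ t₁ t₂ : ZMod m,
      f (i + (t₁.val : ZMod n)) = f (i + (t₂.val : ZMod n)) → t₁ = t₂ := by
    intro t₁ t₂ h
    have h4 : t₁.val = t₂.val := by
      have h5 := congrArg ZMod.val (add_left_cancel (hf h))
      rwa [hcast, hcast] at h5
    exact hvaleq _ _ h4
  set F : ZMod m → V := fun t => f (i + (t.val : ZMod n)) with hF
  set Ee : ZMod m → E := fun t => if t.val = k then g else e (i + (t.val : ZMod n)) with hE
  have hFinj : Function.Injective F := fun t₁ t₂ h => hfinj _ _ h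
  have hEinj : Function.Injective Ee := by
    intro t₁ t₂ h
    simp only [hE] at h
    by_cases h1 : t₁.val = k <;> by_cases h2 : t₂.val = k
    · exact hvaleq _ _ (h1.trans h2.symm)
    · rw [if_pos h1, if_neg h2] at h
      exact absurd h (hgr _)
    · rw [if_neg h1, if_pos h2] at h
      exact absurd h.symm (hgr _)
    · rw [if_neg h1, if_neg h2] at h
      have h5 := congrArg ZMod.val (add_left_cancel (he h))
      rw [hcast, hcast] at h5
      exact hvaleq _ _ h5
  have hsucc : ∀ t : ZMod m, (t + 1).val = (t.val + 1) % m := by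
    intro t
    have h6 : (t + 1 : ZMod m) = ((t.val + 1 : ℕ) : ZMod m) := by
      push_cast [ZMod.natCast_zmod_val]
      ring
    rw [h6, ZMod.val_natCast]
  have hEnds : ∀ t : ZMod m, G.ends (Ee t) = s(F t, F (t + 1)) := by
    intro t
    by_cases h1 : t.val = k
    · have h7 : (t + 1).val = 0 := by
        rw [hsucc, h1]
        simp [hmdef]
      have hFt : F t = f j := by
        simp only [hF, h1]
        rw [hkj]
      have hFt1 : F (t + 1) = f i := by
        simp only [hF, h7]
        norm_num
      rw [hFt, hFt1]
      simp only [hE, if_pos h1]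
      rw [hge]
      exact Sym2.eq_swap
    · have hlt : t.val + 1 < m := by
        have := hval t
        omega
      have h7 : (t + 1).val = t.val + 1 := by
        rw [hsucc, Nat.mod_eq_of_lt hlt]
      simp only [hE, if_neg h1, hF, h7]
      rw [hee]
      congr 2
      push_cast
      ring
  have hcyc : G.IsCycleSet (Set.range F) := ⟨m, by omega, F, hFinj, rfl, Ee, hEinj, hEnds⟩
  refine hmin (Set.range F) ?_ hcyc
  rw [Set.ssubset_iff_subset_ne]
  constructor
  · rintro x ⟨t, rfl⟩
    exact ⟨_, rfl⟩
  · intro hc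
    have hmem : f (i + ((n - 1 : ℕ) : ZMod n)) ∈ Set.range F := by
      rw [hc]; exact ⟨_, rfl⟩
    obtain ⟨t, ht⟩ := hmem
    have h8 : ((t.val : ZMod n)).val = (((n - 1 : ℕ) : ZMod n)).val :=
      congrArg ZMod.val (add_left_cancel (hf ht))
    rw [hcast, ZMod.val_cast_of_lt (by omega)] at h8
    have := hval t
    omega

end Cycle

section Cycle2

variable {n : ℕ} {f : ZMod n → V} {e : ZMod n → E}

lemma ends_rep {g : E} (hg : ∀ x ∈ G.ends g, x ∈ Set.range f) :
    ∃ i j, G.ends g = s(f i, f j) := by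
  have hu : (G.ends g).out.1 ∈ G.ends g := Sym2.out_fst_mem _
  obtain ⟨i, hi⟩ := hg _ hu
  obtain ⟨w, hw⟩ := Sym2.mem_iff_exists.mp (hi ▸ hu)
  have hwmem : w ∈ G.ends g := by rw [hw]; exact Sym2.mem_mk_right _ _
  obtain ⟨j, hj⟩ := hg _ hwmem
  exact ⟨i, j, by rw [hw, hj]⟩

lemma internal_is_cycle_edge (hmin : ∀ B ⊂ Set.range f, ¬ G.IsCycleSet B) (hn3 : 3 ≤ n)
    (hf : Function.Injective f) (he : Function.Injective e)
    (hee : ∀ i, G.ends (e i) = s(f i, f (i + 1))) {g : E}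
    (hg : ∀ x ∈ G.ends g, x ∈ Set.range f) : ∃ i, g = e i := by
  haveI : NeZero n := ⟨by omega⟩
  haveI : Fact (1 < n) := ⟨by omega⟩
  by_contra hc
  push_neg at hc
  obtain ⟨i, j, hw⟩ := ends_rep (G := G) hg
  by_cases hk : (j - i).val + 2 ≤ n
  · exact chord_helper hmin hn3 hf he hee hc hw hk
  · have hv := ZMod.val_lt (j - i)
    have hk' : (j - i).val = n - 1 := by omega
    have hji : j - i = ((n - 1 : ℕ) : ZMod n) := by
      rw [← hk', ZMod.natCast_zmod_val]
    have hcast : ((n - 1 : ℕ) : ZMod n) = -1 := by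
      rw [Nat.cast_sub (by omega : 1 ≤ n), ZMod.natCast_self]
      ring
    have hij : i - j = 1 := by
      have h5 : i - j = -(j - i) := by ring
      rw [h5, hji, hcast]
      ring
    have hk2 : (i - j).val + 2 ≤ n := by
      rw [hij, ZMod.val_one]
      omega
    exact chord_helper hmin hn3 hf he hee hc (hw.trans Sym2.eq_swap) hk2

lemma zmod_step_of_ne (hn2 : 2 ≤ n) (hn3 : n < 3) {l i : ZMod n} :
    l = i ∨ l = i + 1 := by
  haveI : NeZero n := ⟨by omega⟩
  have hv := ZMod.val_lt (l - i)
  have hli : l = i + (((l - i).val : ℕ) : ZMod n) := by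
    rw [ZMod.natCast_zmod_val]; ring
  rcases (by omega : (l - i).val = 0 ∨ (l - i).val = 1) with h | h
  · left; rw [hli, h]; simp
  · right; rw [hli, h]; simp

lemma internal_pair (hmin : ∀ B ⊂ Set.range f, ¬ G.IsCycleSet B) (hn2 : 2 ≤ n)
    (hf : Function.Injective f) (he : Function.Injective e)
    (hee : ∀ i, G.ends (e i) = s(f i, f (i + 1))) {g : E}
    (hg : ∀ x ∈ G.ends g, x ∈ Set.range f) : ∃ i, G.ends g = s(f i, f (i + 1)) := by
  haveI : NeZero n := ⟨by omega⟩
  rcases Nat.lt_or_ge n 3 with hn3 | hn3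
  · obtain ⟨i, j, hw⟩ := ends_rep (G := G) hg
    by_cases hij : j = i
    · exact absurd (hw.trans (by rw [hij])) (fun hl => no_loop_in_range hn2 hf hmin hl ⟨i, rfl⟩)
    · rcases zmod_step_of_ne (l := j) (i := i) hn2 hn3 with h | h
      · exact absurd h hij
      · exact ⟨i, by rw [hw, h]⟩
  · obtain ⟨i, rfl⟩ := internal_is_cycle_edge hmin hn3 hf he hee hg
    exact ⟨i, hee i⟩

lemma third_to_compl [Finite V] [Fintype E] (h3 : G.Trivalent) (hconn : G.Connected)
    (hmin : ∀ B ⊂ Set.range f, ¬ G.IsCycleSet B) (hn2 : 2 ≤ n)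
    (hf : Function.Injective f) (he : Function.Injective e)
    (hee : ∀ i, G.ends (e i) = s(f i, f (i + 1)))
    (hAc : (Set.range f)ᶜ.Nonempty) (i : ZMod n) :
    ∃ g w, w ∈ (Set.range f)ᶜ ∧ G.ends g = s(f i, w) := by
  haveI : NeZero n := ⟨by omega⟩
  obtain ⟨g, hgmem, hgr⟩ := exists_third_at h3 hn2 hf he hee i
  obtain ⟨w, hw⟩ := Sym2.mem_iff_exists.mp hgmem
  by_cases hwr : w ∈ Set.range f
  · exfalso
    have hint : ∀ x ∈ G.ends g, x ∈ Set.range f := by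
      intro x hx
      rw [hw] at hx
      rcases Sym2.mem_iff.mp hx with rfl | rfl
      exacts [⟨i, rfl⟩, hwr]
    rcases Nat.lt_or_ge n 3 with hn3 | hn3
    · obtain ⟨jw, rfl⟩ := hwr
      by_cases hij : jw = i
      · exact no_loop_in_range hn2 hf hmin (hw.trans (by rw [hij])) ⟨i, rfl⟩
      · rcases zmod_step_of_ne (l := jw) (i := i) hn2 hn3 with h | h
        · exact hij h
        · subst h
          refine connected_no_crossing (S := Set.range f) hconn ⟨f i, ⟨i, rfl⟩⟩ hAc ?_
          intro h x y hxy hx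
          obtain ⟨l, rfl⟩ := hx
          have hym : y ∈ G.ends h := by rw [hxy]; exact Sym2.mem_mk_right _ _
          by_cases hh : ∀ j', h ≠ e j'
          · have hfl : f l ∈ G.ends h := by rw [hxy]; exact Sym2.mem_mk_left _ _
            have hfl2 : f l ∈ G.ends g := by
              rw [hw]
              rcases zmod_step_of_ne (l := l) (i := i) hn2 hn3 with rfl | rfl
              · exact Sym2.mem_mk_left _ _
              · exact Sym2.mem_mk_right _ _
            have hhg := third_unique h3 (by omega) hf he hee l hfl hfl2 hh hgr
            rw [hhg, hw] at hym
            rcases Sym2.mem_iff.mp hym with rfl | rfl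
            exacts [⟨i, rfl⟩, ⟨i + 1, rfl⟩]
          · push_neg at hh
            obtain ⟨j', rfl⟩ := hh
            rw [hee] at hym
            rcases Sym2.mem_iff.mp hym with rfl | rfl
            exacts [⟨j', rfl⟩, ⟨j' + 1, rfl⟩]
    · obtain ⟨k', hk'⟩ := internal_is_cycle_edge hmin hn3 hf he hee hint
      exact hgr k' hk'
  · exact ⟨g, w, hwr, hw⟩

end Cycle2

section Gaps

variable {n : ℕ} {f : ZMod n → V} {e : ZMod n → E}

lemma walk_back (hee : ∀ i, G.ends (e i) = s(f i, f (i + 1))) (A' : Set V) :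
    ∀ t : ℕ, ∀ j : ZMod n, f j ∉ A' → f (j - ((t + 1 : ℕ) : ZMod n)) ∈ A' →
      ∃ i : ZMod n, (f i ∈ A' ∧ f (i + 1) ∉ A') ∧
        ∀ (hj' : f j ∈ (A'ᶜ : Set V)) (h2 : f (i + 1) ∈ (A'ᶜ : Set V)),
          Relation.EqvGen (srel G A'ᶜ) ⟨f j, hj'⟩ ⟨f (i + 1), h2⟩ := by
  intro t
  induction t with
  | zero =>
    intro j hj hmem
    have h1 : (((0 : ℕ) + 1 : ℕ) : ZMod n) = 1 := by norm_num
    rw [h1] at hmem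
    have hq : j - 1 + 1 = j := sub_add_cancel j 1
    refine ⟨j - 1, ⟨hmem, by rw [hq]; exact hj⟩, ?_⟩
    intro hj' h2
    rw [show (⟨f (j - 1 + 1), h2⟩ : (A'ᶜ : Set V)) = ⟨f j, hj'⟩ from
      Subtype.ext (congrArg f hq)]
    exact Relation.EqvGen.refl _
  | succ t ih =>
    intro j hj hmem
    by_cases hprev : f (j - 1) ∈ A'
    · have hq : j - 1 + 1 = j := sub_add_cancel j 1
      refine ⟨j - 1, ⟨hprev, by rw [hq]; exact hj⟩, ?_⟩
      intro hj' h2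
      rw [show (⟨f (j - 1 + 1), h2⟩ : (A'ᶜ : Set V)) = ⟨f j, hj'⟩ from
        Subtype.ext (congrArg f hq)]
      exact Relation.EqvGen.refl _
    · have hmem' : f (j - 1 - ((t + 1 : ℕ) : ZMod n)) ∈ A' := by
        have hcalc : j - 1 - ((t + 1 : ℕ) : ZMod n) = j - ((t + 1 + 1 : ℕ) : ZMod n) := by
          push_cast
          ring
        rw [hcalc]
        exact hmem
      obtain ⟨i, hi, hstep⟩ := ih (j - 1) hprev hmem'
      refine ⟨i, hi, fun hj' h2 => ?_⟩
      refine Relation.EqvGen.trans _ _ _ ?_ (hstep hprev h2)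
      refine Relation.EqvGen.rel _ _ ?_
      exact ⟨e (j - 1), by rw [hee, sub_add_cancel]; exact Sym2.eq_swap⟩

lemma comp_le_gaps [Fintype V] [Fintype E] (h3 : G.Trivalent) (hconn : G.Connected)
    (hmin : ∀ B ⊂ Set.range f, ¬ G.IsCycleSet B) (hn2 : 2 ≤ n)
    (hf : Function.Injective f) (he : Function.Injective e)
    (hee : ∀ i, G.ends (e i) = s(f i, f (i + 1)))
    {A' : Set V} (hA' : A' ⊂ Set.range f) (hA'ne : A'.Nonempty)
    (hrhs : (Set.range f)ᶜ = ∅ ∨ G.numComponentsSub (Set.range f)ᶜ = 1) :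
    G.numComponentsSub A'ᶜ ≤ {i : ZMod n | f i ∈ A' ∧ f (i + 1) ∉ A'}.ncard := by
  haveI : NeZero n := ⟨by omega⟩
  obtain ⟨a₀, ha₀⟩ := hA'ne
  obtain ⟨σ₀, hσ₀⟩ := hA'.subset ha₀
  have hσ₀A : f σ₀ ∈ A' := hσ₀.symm ▸ ha₀
  have key : ∀ (j : ZMod n), f j ∉ A' →
      ∃ i : ZMod n, (f i ∈ A' ∧ f (i + 1) ∉ A') ∧
        ∀ (hj' : f j ∈ (A'ᶜ : Set V)) (h2 : f (i + 1) ∈ (A'ᶜ : Set V)),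
          Relation.EqvGen (srel G A'ᶜ) ⟨f j, hj'⟩ ⟨f (i + 1), h2⟩ := by
    intro j hj
    have hne0 : (j - σ₀).val ≠ 0 := by
      intro h0
      have h1 : j - σ₀ = 0 := (ZMod.val_eq_zero _).mp h0
      have h2 : j = σ₀ := by
        have := sub_eq_zero.mp h1
        exact this
      exact hj (h2 ▸ hσ₀A)
    have hjs : j - ((((j - σ₀).val - 1) + 1 : ℕ) : ZMod n) = σ₀ := by
      have h1 : (((j - σ₀).val - 1) + 1 : ℕ) = (j - σ₀).val := by omega
      rw [h1, ZMod.natCast_zmod_val]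
      ring
    exact walk_back hee A' ((j - σ₀).val - 1) j hj (by rw [hjs]; exact hσ₀A)
  rw [ncs_def, ← Nat.card_coe_set_eq]
  refine Nat.card_le_card_of_surjective
    (fun p : {i : ZMod n | f i ∈ A' ∧ f (i + 1) ∉ A'} =>
      Quot.mk (srel G A'ᶜ) ⟨f (p.1 + 1), p.2.2⟩) ?_
  intro q
  induction q using Quot.ind with
  | _ x =>
    by_cases hx : x.1 ∈ Set.range f
    · obtain ⟨j, hj⟩ := hx
      have hjA : f j ∉ A' := by rw [hj]; exact x.2
      obtain ⟨i, higap, hE⟩ := key j hjA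
      refine ⟨⟨i, higap⟩, ?_⟩
      have hxx : (⟨f j, hjA⟩ : (A'ᶜ : Set V)) = x := Subtype.ext hj
      rw [← hxx]
      exact (Quot.eqvGen_sound (hE hjA higap.2)).symm
    · rcases hrhs with hempty | hone
      · exact absurd (show x.1 ∈ (∅ : Set V) from hempty ▸ hx) (Set.notMem_empty _)
      · obtain ⟨b, hbr, hbA⟩ := Set.exists_of_ssubset hA'
        obtain ⟨j, hj⟩ := hbr
        have hjA : f j ∉ A' := by rw [hj]; exact hbA
        obtain ⟨g, w, hwc, hgw⟩ := third_to_compl h3 hconn hmin hn2 hf he hee ⟨x.1, hx⟩ j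
        have hAcsub : (Set.range f)ᶜ ⊆ A'ᶜ := Set.compl_subset_compl.mpr hA'.subset
        have hone' : Nat.card (Quot (srel G (Set.range f)ᶜ)) = 1 := hone
        have hsub1 : Subsingleton (Quot (srel G (Set.range f)ᶜ)) :=
          (Nat.card_eq_one_iff_unique.mp hone').1
        have hq : Quot.mk (srel G (Set.range f)ᶜ) ⟨x.1, hx⟩ = Quot.mk _ ⟨w, hwc⟩ :=
          Subsingleton.elim _ _
        have hE1 := eqvGen_subset hAcsub (Quot.eqvGen_exact hq)
        have hwA' : w ∈ (A'ᶜ : Set V) := hAcsub hwc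
        have hjA' : f j ∈ (A'ᶜ : Set V) := hjA
        have hstep : Relation.EqvGen (srel G A'ᶜ) ⟨w, hwA'⟩ ⟨f j, hjA'⟩ :=
          Relation.EqvGen.rel _ _ ⟨g, by rw [hgw]; exact Sym2.eq_swap⟩
        obtain ⟨i, higap, hE⟩ := key j hjA
        refine ⟨⟨i, higap⟩, ?_⟩
        have hfinal := Relation.EqvGen.trans _ _ _
          (Relation.EqvGen.trans _ _ _ hE1 hstep) (hE hjA' higap.2)
        exact (Quot.eqvGen_sound hfinal).symm

lemma comp_mono_forward [Fintype V] [Fintype E] (h3 : G.Trivalent) (hn2 : 2 ≤ n)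
    (hf : Function.Injective f) (he : Function.Injective e)
    (hee : ∀ i, G.ends (e i) = s(f i, f (i + 1)))
    (hAc : (Set.range f)ᶜ.Nonempty) :
    G.numComponentsSub (Set.range f)ᶜ ≤ G.numComponentsSub ((Set.range f \ {f 0})ᶜ) := by
  classical
  haveI : NeZero n := ⟨by omega⟩
  obtain ⟨x₀, hx₀⟩ := hAc
  have hmemA' : ∀ v : V, v ∈ ((Set.range f \ {f 0})ᶜ : Set V) ↔
      (v ∈ (Set.range f)ᶜ ∨ v = f 0) := by
    intro v
    simp only [Set.mem_compl_iff, Set.mem_diff, Set.mem_singleton_iff, not_and, not_not]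
    constructor
    · intro h
      by_cases hv : v ∈ Set.range f
      · exact Or.inr (h hv)
      · exact Or.inl hv
    · rintro (h | h)
      · intro hv; exact absurd hv h
      · intro _; exact h
  have hf0 : f 0 ∉ (Set.range f)ᶜ := fun hc => hc ⟨0, rfl⟩
  let tgt : Quot (srel G (Set.range f)ᶜ) :=
    if hex : ∃ w, w ∈ (Set.range f)ᶜ ∧ ∃ g : E, G.ends g = s(f 0, w)
    then Quot.mk _ ⟨hex.choose, hex.choose_spec.1⟩ else Quot.mk _ ⟨x₀, hx₀⟩
  have htgt : ∀ (c : V) (hc : c ∈ (Set.range f)ᶜ) (h : E), G.ends h = s(f 0, c) →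
      tgt = Quot.mk (srel G (Set.range f)ᶜ) ⟨c, hc⟩ := by
    intro c hc h hh
    have hex : ∃ w, w ∈ (Set.range f)ᶜ ∧ ∃ g : E, G.ends g = s(f 0, w) := ⟨c, hc, h, hh⟩
    show (if hex : ∃ w, w ∈ (Set.range f)ᶜ ∧ ∃ g : E, G.ends g = s(f 0, w)
      then Quot.mk (srel G (Set.range f)ᶜ) ⟨hex.choose, hex.choose_spec.1⟩
      else Quot.mk _ ⟨x₀, hx₀⟩) = _
    rw [dif_pos hex]
    obtain ⟨g₀, hg₀⟩ := hex.choose_spec.2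
    have hwc := hex.choose_spec.1
    have hne1 : ∀ j, h ≠ e j := by
      intro j hc2
      rw [hc2, hee] at hh
      rcases Sym2.eq_iff.mp hh with ⟨h1', h2'⟩ | ⟨h1', h2'⟩
      · exact hc (h2' ▸ ⟨j + 1, rfl⟩)
      · exact hc (h1' ▸ ⟨j, rfl⟩)
    have hne0 : ∀ j, g₀ ≠ e j := by
      intro j hc2
      rw [hc2, hee] at hg₀
      rcases Sym2.eq_iff.mp hg₀ with ⟨h1', h2'⟩ | ⟨h1', h2'⟩
      · exact hwc (h2' ▸ ⟨j + 1, rfl⟩)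
      · exact hwc (h1' ▸ ⟨j, rfl⟩)
    have hmh : f 0 ∈ G.ends h := by rw [hh]; exact Sym2.mem_mk_left _ _
    have hmg : f 0 ∈ G.ends g₀ := by rw [hg₀]; exact Sym2.mem_mk_left _ _
    have heq := third_unique h3 (by omega) hf he hee 0 hmh hmg hne1 hne0
    rw [heq, hg₀] at hh
    rcases Sym2.eq_iff.mp hh with ⟨-, h2'⟩ | ⟨h1', -⟩
    · exact congrArg _ (Subtype.ext h2')
    · exact absurd (h1' ▸ hf0) (fun hcc => hcc hc)
  let φ : Quot (srel G ((Set.range f \ {f 0})ᶜ)) → Quot (srel G (Set.range f)ᶜ) := Quot.lift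
    (fun x => if hx : x.1 ∈ (Set.range f)ᶜ then Quot.mk _ ⟨x.1, hx⟩ else tgt)
    (by rintro a b ⟨h, hh⟩
        show (if hx : a.1 ∈ (Set.range f)ᶜ
            then Quot.mk (srel G (Set.range f)ᶜ) ⟨a.1, hx⟩ else tgt)
          = (if hx : b.1 ∈ (Set.range f)ᶜ
            then Quot.mk (srel G (Set.range f)ᶜ) ⟨b.1, hx⟩ else tgt)
        by_cases ha : a.1 ∈ (Set.range f)ᶜ <;> by_cases hb : b.1 ∈ (Set.range f)ᶜ
        · rw [dif_pos ha, dif_pos hb]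
          exact Quot.sound ⟨h, hh⟩
        · have hb0 : b.1 = f 0 := ((hmemA' b.1).mp b.2).resolve_left hb
          rw [dif_pos ha, dif_neg hb]
          exact (htgt a.1 ha h (by rw [hh, hb0]; exact Sym2.eq_swap)).symm
        · have ha0 : a.1 = f 0 := ((hmemA' a.1).mp a.2).resolve_left ha
          rw [dif_neg ha, dif_pos hb]
          exact htgt b.1 hb h (by rw [ha0] at hh; exact hh)
        · rw [dif_neg ha, dif_neg hb])
  have hsurj : Function.Surjective φ := by
    intro q
    induction q using Quot.ind with
    | _ x =>
      refine ⟨Quot.mk _ ⟨x.1, (hmemA' x.1).mpr (Or.inl x.2)⟩, ?_⟩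
      show (if hx : x.1 ∈ (Set.range f)ᶜ
          then Quot.mk (srel G (Set.range f)ᶜ) ⟨x.1, hx⟩ else tgt) = Quot.mk _ x
      rw [dif_pos x.2]
  rw [ncs_def, ncs_def]
  exact Nat.card_le_card_of_surjective φ hsurj

end Gaps

end MGAux

/-- For a trivalent 2-edge-connected finite graph `G`, an
inclusion-minimal cycle `A ⊆ V` is a circuit of `M_G` iff removing `A` does not
disconnect `G`, i.e. `G[V-A]` is connected or empty. -/
theorem minimalCycle_circuit_iff {V E : Type*} [Fintype V] [Fintype E]
    (G : Multigraph V E) (h3 : G.Trivalent) (h2 : G.TwoEdgeConnected)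
    (A : Set V) (hA : G.IsCycleSet A)
    (hmin : ∀ B : Set V, B ⊂ A → ¬ G.IsCycleSet B) :
    G.IsCircuitMG A ↔ (Aᶜ = (∅ : Set V) ∨ G.numComponentsSub Aᶜ = 1) := by
  classical
  open MGAux in
  obtain ⟨n, hn, f, hf, hfA, e, he, hee⟩ := hA
  subst hfA
  haveI : Nonempty V := ⟨f 0⟩
  haveI : NeZero n := ⟨by omega⟩
  have hconn := h2.1
  have hAn : (Set.range f).ncard = n := by
    rw [← Nat.card_coe_set_eq, Nat.card_range_of_injective hf, Nat.card_zmod]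
  have hAne : (Set.range f).Nonempty := ⟨f 0, 0, rfl⟩
  constructor
  · rintro ⟨-, -, hminR⟩
    by_contra hc
    push_neg at hc
    obtain ⟨hcne, hcone⟩ := hc
    have hAcne : (Set.range f)ᶜ.Nonempty := hcne
    have hw1 : 1 ≤ G.numComponentsSub (Set.range f)ᶜ := by
      rw [ncs_def]
      haveI : Nonempty (((Set.range f)ᶜ : Set V)) := hAcne.to_subtype
      haveI : Nonempty (Quot (srel G (Set.range f)ᶜ)) := Nonempty.map (Quot.mk _) ‹_›
      exact Nat.card_pos
    have hw2 : 2 ≤ G.numComponentsSub (Set.range f)ᶜ := by omega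
    rcases Nat.lt_or_ge n 2 with hn1 | hn2
    · -- n = 1 : contradiction with 2-edge-connectedness
      have hn1' : n = 1 := by omega
      subst hn1'
      haveI : Subsingleton (ZMod 1) := inferInstanceAs (Subsingleton (Fin 1))
      have h01 : (0 + 1 : ZMod 1) = 0 := Subsingleton.elim _ _
      have hloop : G.ends (e 0) = s(f 0, f 0) := by rw [hee, h01]
      have hex : ∃ g, f 0 ∈ G.ends g ∧ g ≠ e 0 := by
        by_contra hcx
        push_neg at hcx
        have h30 := h3 (f 0)
        rw [degree_def] at h30
        have hz : ∀ g ∈ (Finset.univ : Finset E), g ∉ ({e 0} : Finset E) →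
            (if G.ends g = s(f 0, f 0) then 2 else if f 0 ∈ G.ends g then 1 else 0) = 0 := by
          intro g _ hgm
          simp only [Finset.mem_singleton] at hgm
          rw [if_neg, if_neg]
          · intro hm; exact hgm (hcx g hm)
          · intro hl; exact hgm (hcx g (by rw [hl]; exact Sym2.mem_mk_left _ _))
        have hs := Finset.sum_subset (Finset.subset_univ ({e 0} : Finset E)) hz
        rw [← hs, Finset.sum_singleton, if_pos hloop] at h30
        omega
      obtain ⟨g, hg0, hgne⟩ := hex
      have huniq : ∀ h', f 0 ∈ G.ends h' → h' = e 0 ∨ h' = g := by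
        intro h' hh'
        by_contra hcc
        push_neg at hcc
        obtain ⟨hc1, hc2⟩ := hcc
        have hm1 : h' ∉ ({g, e 0} : Finset E) := by simp [hc1, hc2]
        have hm2 : g ∉ ({e 0} : Finset E) := by simp [hgne]
        have hcard : ({h', g, e 0} : Finset E).card = 3 := by
          rw [Finset.card_insert_of_notMem hm1, Finset.card_insert_of_notMem hm2,
            Finset.card_singleton]
        have hma : ∀ x ∈ ({h', g, e 0} : Finset E), f 0 ∈ G.ends x := by
          intro x hx
          simp only [Finset.mem_insert, Finset.mem_singleton] at hx
          rcases hx with rfl | rfl | rfl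
          exacts [hh', hg0, by rw [hloop]; exact Sym2.mem_mk_left _ _]
        have h4 := card_succ_le_degree (G := G) (f 0) _ hma (by simp) hloop
        rw [hcard, h3 (f 0)] at h4
        omega
      obtain ⟨y₀, hy₀⟩ := hAcne
      have hcg : Nat.card
          (Quot (fun u v : V => ∃ h' ∈ ({g}ᶜ : Set E), G.ends h' = s(u, v))) = 1 := h2.2 g
      have hsub : Subsingleton
          (Quot (fun u v : V => ∃ h' ∈ ({g}ᶜ : Set E), G.ends h' = s(u, v))) :=
        (Nat.card_eq_one_iff_unique.mp hcg).1
      have hq : Quot.mk (fun u v : V => ∃ h' ∈ ({g}ᶜ : Set E), G.ends h' = s(u, v)) (f 0)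
          = Quot.mk _ y₀ := Subsingleton.elim _ _
      have hstep : ∀ a b : V, (∃ h' ∈ ({g}ᶜ : Set E), G.ends h' = s(a, b)) →
          ((a = f 0) ↔ (b = f 0)) := by
        rintro a b ⟨h', hne, hends⟩
        have hne' : h' ≠ g := hne
        constructor
        · rintro rfl
          rcases huniq h' (by rw [hends]; exact Sym2.mem_mk_left _ _) with rfl | rfl
          · have h5 := hloop.symm.trans hends
            rcases Sym2.eq_iff.mp h5 with ⟨-, hb⟩ | ⟨hb, -⟩ <;> exact hb.symm
          · exact absurd rfl hne'
        · rintro rfl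
          rcases huniq h' (by rw [hends]; exact Sym2.mem_mk_right _ _) with rfl | rfl
          · have h5 := hloop.symm.trans hends
            rcases Sym2.eq_iff.mp h5 with ⟨hb, -⟩ | ⟨-, hb⟩ <;> exact hb.symm
          · exact absurd rfl hne'
      have hinv := eqvGen_iff_of_invariant (· = f 0) hstep (Quot.eqvGen_exact hq)
      exact hy₀ ⟨0, (hinv.mp rfl).symm⟩
    · -- n ≥ 2
      set A' := Set.range f \ {f 0} with hA'def
      have hmem0 : f 0 ∈ Set.range f := ⟨0, rfl⟩
      have hss : A' ⊂ Set.range f := Set.sdiff_singleton_ssubset.mpr hmem0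
      have hne' : A'.Nonempty :=
        ⟨f 1, ⟨1, rfl⟩, fun hc => zmod_one_ne_zero hn2 (hf hc)⟩
      have hcard' : A'.ncard = n - 1 := by
        rw [hA'def, Set.ncard_diff_singleton_of_mem hmem0, hAn]
      have hintlb : n - 2 ≤ (intE G A').ncard := by
        have himg : e '' {i : ZMod n | i ≠ 0 ∧ i + 1 ≠ 0} ⊆ intE G A' := by
          rintro g ⟨i, ⟨hi0, hi1⟩, rfl⟩
          intro x hx
          rw [hee] at hx
          rcases Sym2.mem_iff.mp hx with rfl | rfl
          · exact ⟨⟨i, rfl⟩, fun hc1 => hi0 (hf hc1)⟩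
          · exact ⟨⟨i + 1, rfl⟩, fun hc1 => hi1 (hf hc1)⟩
        have hcards : ({i : ZMod n | i ≠ 0 ∧ i + 1 ≠ 0}).ncard = n - 2 := by
          have hsetsplit : {i : ZMod n | i ≠ 0 ∧ i + 1 ≠ 0} = ({0, -1} : Set (ZMod n))ᶜ := by
            ext i
            simp only [Set.mem_setOf_eq, Set.mem_compl_iff, Set.mem_insert_iff,
              Set.mem_singleton_iff, not_or]
            constructor
            · rintro ⟨hh1, hh2⟩
              exact ⟨hh1, fun hc => hh2 (by rw [hc]; ring)⟩
            · rintro ⟨hh1, hh2⟩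
              refine ⟨hh1, fun hc => hh2 ?_⟩
              linear_combination hc
          have hzne : (0 : ZMod n) ≠ -1 := by
            intro hcc
            exact zmod_one_ne_zero hn2 (by linear_combination hcc)
          have hpc : ({0, -1} : Set (ZMod n)).ncard = 2 := Set.ncard_pair hzne
          have hcompl := Set.ncard_add_ncard_compl ({0, -1} : Set (ZMod n))
          have hzcard : Nat.card (ZMod n) = n := Nat.card_zmod n
          rw [hsetsplit]
          omega
        have himgcard : (e '' {i : ZMod n | i ≠ 0 ∧ i + 1 ≠ 0}).ncard = n - 2 := by
          rw [Set.ncard_image_of_injective _ he, hcards]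
        calc n - 2 = _ := himgcard.symm
          _ ≤ _ := Set.ncard_le_ncard himg (Set.toFinite _)
      have hwlb : 2 ≤ G.numComponentsSub A'ᶜ :=
        le_trans hw2 (comp_mono_forward h3 hn2 hf he hee hAcne)
      have hble := (bondRank_le_iff h3 hconn A').mpr (by omega)
      exact absurd (hminR A' hss hne') (not_lt.mpr hble)
  · intro hrhs
    refine ⟨hAne, ?_, ?_⟩
    · -- r*(δ(A)) ≤ |A|
      rw [bondRank_le_iff h3 hconn, hAn]
      rcases hrhs with hempty | hone
      · have huniv : Set.range f = Set.univ := Set.compl_empty_iff.mp hempty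
        rcases Nat.lt_or_ge n 2 with hn1 | hn2
        · exfalso
          have hn1' : n = 1 := by omega
          subst hn1'
          haveI : Subsingleton (ZMod 1) := inferInstanceAs (Subsingleton (Fin 1))
          have hallv : ∀ v : V, v = f 0 := by
            intro v
            have hv : v ∈ Set.range f := huniv ▸ Set.mem_univ v
            obtain ⟨i, rfl⟩ := hv
            rw [Subsingleton.elim i 0]
          refine not_trivalent_loops h3 (f 0) (fun g => ?_)
          have h1 : (G.ends g).out.1 ∈ G.ends g := Sym2.out_fst_mem _
          obtain ⟨w', hw'⟩ := Sym2.mem_iff_exists.mp h1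
          rw [hw', hallv (G.ends g).out.1, hallv w']
        · obtain ⟨g, hgmem, hgr⟩ := exists_third_at h3 hn2 hf he hee 0
          have hsubi : insert g (Set.range e) ⊆ intE G (Set.range f) := by
            intro x _ y _
            exact huniv ▸ Set.mem_univ y
          have hnotmem : g ∉ Set.range e := by rintro ⟨j, rfl⟩; exact hgr j rfl
          have hrange_card : (Set.range e).ncard = n := by
            rw [← Nat.card_coe_set_eq, Nat.card_range_of_injective he, Nat.card_zmod]
          have hlbA : n + 1 ≤ (intE G (Set.range f)).ncard := by
            have h5 : (insert g (Set.range e)).ncard = n + 1 := by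
              rw [Set.ncard_insert_of_notMem hnotmem (Set.toFinite _), hrange_card]
            calc n + 1 = _ := h5.symm
              _ ≤ _ := Set.ncard_le_ncard hsubi (Set.toFinite _)
          omega
      · have hsubi : Set.range e ⊆ intE G (Set.range f) := by
          rintro x ⟨j, rfl⟩ y hy
          rw [hee] at hy
          rcases Sym2.mem_iff.mp hy with rfl | rfl
          exacts [⟨j, rfl⟩, ⟨j + 1, rfl⟩]
        have hrange_card : (Set.range e).ncard = n := by
          rw [← Nat.card_coe_set_eq, Nat.card_range_of_injective he, Nat.card_zmod]
        have hlbA : n ≤ (intE G (Set.range f)).ncard := by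
          calc n = _ := hrange_card.symm
            _ ≤ _ := Set.ncard_le_ncard hsubi (Set.toFinite _)
        omega
    · -- minimality
      intro A' hss hne'
      rw [bondRank_gt_iff h3 hconn]
      have hn2 : 2 ≤ n := by
        by_contra hx2
        have hn1' : n = 1 := by omega
        subst hn1'
        haveI : Subsingleton (ZMod 1) := inferInstanceAs (Subsingleton (Fin 1))
        obtain ⟨a, ha⟩ := hne'
        obtain ⟨b, hbr, hbA⟩ := Set.exists_of_ssubset hss
        obtain ⟨i, rfl⟩ := hss.subset ha
        obtain ⟨j, hj⟩ := hbr
        rw [Subsingleton.elim j i] at hj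
        rw [← hj] at hbA
        exact hbA ha
      have hPhi : A'.ncard
          = ({i : ZMod n | f i ∈ A' ∧ f (i + 1) ∈ A'}).ncard
            + ({i : ZMod n | f i ∈ A' ∧ f (i + 1) ∉ A'}).ncard := by
        have h1 : f '' (f ⁻¹' A') = A' := Set.image_preimage_eq_of_subset hss.subset
        have hsplit : f ⁻¹' A'
            = {i : ZMod n | f i ∈ A' ∧ f (i + 1) ∈ A'}
              ∪ {i : ZMod n | f i ∈ A' ∧ f (i + 1) ∉ A'} := by
          ext i
          simp only [Set.mem_preimage, Set.mem_union, Set.mem_setOf_eq]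
          tauto
        have hdisj : Disjoint {i : ZMod n | f i ∈ A' ∧ f (i + 1) ∈ A'}
            {i : ZMod n | f i ∈ A' ∧ f (i + 1) ∉ A'} := by
          rw [Set.disjoint_left]
          rintro i ⟨-, hi2⟩ ⟨-, hi4⟩
          exact hi4 hi2
        calc A'.ncard = (f '' (f ⁻¹' A')).ncard := by rw [h1]
          _ = (f ⁻¹' A').ncard := Set.ncard_image_of_injective _ hf
          _ = _ := by
              rw [hsplit, Set.ncard_union_eq hdisj (Set.toFinite _) (Set.toFinite _)]
      have hgap : G.numComponentsSub A'ᶜ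
          ≤ ({i : ZMod n | f i ∈ A' ∧ f (i + 1) ∉ A'}).ncard :=
        comp_le_gaps h3 hconn hmin hn2 hf he hee hss hne' hrhs
      have hintP : (intE G A').ncard ≤ ({i : ZMod n | f i ∈ A' ∧ f (i + 1) ∈ A'}).ncard := by
        set m : E → ZMod n :=
          fun g => if hg : ∃ i, G.ends g = s(f i, f (i + 1)) then hg.choose else 0 with hm
        have hmspec : ∀ g ∈ intE G A', G.ends g = s(f (m g), f (m g + 1)) := by
          intro g hg
          have hint : ∀ x ∈ G.ends g, x ∈ Set.range f := fun x hx => hss.subset (hg x hx)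
          have hexi : ∃ i, G.ends g = s(f i, f (i + 1)) :=
            internal_pair hmin hn2 hf he hee hint
          simp only [hm, dif_pos hexi]
          exact hexi.choose_spec
        have hmaps : ∀ g ∈ intE G A', m g ∈ {i : ZMod n | f i ∈ A' ∧ f (i + 1) ∈ A'} := by
          intro g hg
          have h5 := hmspec g hg
          constructor
          · apply hg; rw [h5]; exact Sym2.mem_mk_left _ _
          · apply hg; rw [h5]; exact Sym2.mem_mk_right _ _
        have hinj : Set.InjOn m (intE G A') := by
          intro g₁ hg₁ g₂ hg₂ hmeq
          have h5 := hmspec g₁ hg₁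
          have h6 := hmspec g₂ hg₂
          rw [hmeq] at h5
          rcases Nat.lt_or_ge n 3 with hn3 | hn3
          · exfalso
            have hi1 : f (m g₂) ∈ A' := (hmaps g₂ hg₂).1
            have hi2 : f (m g₂ + 1) ∈ A' := (hmaps g₂ hg₂).2
            have hpne : f (m g₂) ≠ f (m g₂ + 1) :=
              fun hcc => zmod_add_one_ne hn2 _ (hf hcc).symm
            have hpair : ({f (m g₂), f (m g₂ + 1)} : Set V) ⊆ A' := by
              rintro x (rfl | rfl)
              exacts [hi1, hi2]
            have h7 : 2 ≤ A'.ncard := by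
              rw [← Set.ncard_pair hpne]
              exact Set.ncard_le_ncard hpair (Set.toFinite _)
            have h8 : A'.ncard < n := by
              rw [← hAn]
              exact Set.ncard_lt_ncard hss (Set.toFinite _)
            omega
          · obtain ⟨k₁, rfl⟩ := internal_is_cycle_edge hmin hn3 hf he hee
              (fun x hx => hss.subset (hg₁ x hx))
            obtain ⟨k₂, rfl⟩ := internal_is_cycle_edge hmin hn3 hf he hee
              (fun x hx => hss.subset (hg₂ x hx))
            have h9 : G.ends (e k₁) = G.ends (e k₂) := h5.trans h6.symm
            rw [hee, hee] at h9
            rcases Sym2.eq_iff.mp h9 with ⟨ha', -⟩ | ⟨ha', hb'⟩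
            · rw [hf ha']
            · exfalso
              have e1 : k₁ = k₂ + 1 := hf ha'
              have e2 : k₁ + 1 = k₂ := hf hb'
              have h10 : ((2 : ℕ) : ZMod n) = 0 := by
                push_cast
                linear_combination e2 - e1
              have h11 := (ZMod.natCast_eq_zero_iff 2 n).mp h10
              have h12 := Nat.le_of_dvd two_pos h11
              omega
        exact Set.ncard_le_ncard_of_injOn m hmaps hinj (Set.toFinite _)
      omega
end

section
/- Let G be a trivalent, 2-edge-connected finite graph, A ⊆ V(G), and v ∈ V−A a vertex lying on a cycle of the induced subgraph G[V−A]. Then the rank of A ∪ {v} in the graph curve matroid M_G is strictly greater than the rank of A. Consequently, for any basis B of M_G, the induced subgraph G[V−B] is acyclic. -/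
namespace Multigraph

variable {V E : Type*} (G : Multigraph V E)

open Relation

variable {V E : Type*} (G : Multigraph V E)

def rel (B : Set E) : V → V → Prop := fun u w => ∃ e ∈ B, G.ends e = s(u, w)

noncomputable def comp (B : Set E) : ℕ := Nat.card (Quot (G.rel B))

variable {G}

lemma rel_symm {B : Set E} {u w : V} (h : G.rel B u w) : G.rel B w u := by
  obtain ⟨e, he, h2⟩ := h
  exact ⟨e, he, by rw [h2, Sym2.eq_swap]⟩

lemma rel_mono {B B' : Set E} (h : B ⊆ B') {a b : V} (hr : G.rel B a b) : G.rel B' a b := by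
  obtain ⟨e, he, h2⟩ := hr; exact ⟨e, h he, h2⟩

lemma eqvGen_mono {B B' : Set E} (h : B ⊆ B') {a b : V}
    (hr : EqvGen (G.rel B) a b) : EqvGen (G.rel B') a b :=
  Relation.EqvGen.mono (fun _ _ => rel_mono h) a b hr

lemma eqvGen_closed {B : Set E} {X : Set V}
    (hX : ∀ ⦃a b⦄, G.rel B a b → (a ∈ X ↔ b ∈ X)) {a b : V}
    (h : EqvGen (G.rel B) a b) : a ∈ X ↔ b ∈ X := by
  induction h with
  | rel x y hxy => exact hX hxy
  | refl x => exact Iff.rfl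
  | symm x y _ ih => exact ih.symm
  | trans x y z _ _ ih1 ih2 => exact ih1.trans ih2

/-- key decomposition of connectivity after inserting an edge -/
lemma eqvGen_insert {B : Set E} {e : E} {u w : V} (he : G.ends e = s(u, w)) {a b : V}
    (h : EqvGen (G.rel (insert e B)) a b) :
    EqvGen (G.rel B) a b ∨
      (EqvGen (G.rel B) a u ∧ EqvGen (G.rel B) w b) ∨
      (EqvGen (G.rel B) a w ∧ EqvGen (G.rel B) u b) := by
  have tr : ∀ {p q r : V}, EqvGen (G.rel B) p q → EqvGen (G.rel B) q r → EqvGen (G.rel B) p r :=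
    fun h h' => EqvGen.trans _ _ _ h h'
  have sy : ∀ {p q : V}, EqvGen (G.rel B) p q → EqvGen (G.rel B) q p :=
    fun h => EqvGen.symm _ _ h
  induction h with
  | rel x y hxy =>
    obtain ⟨f, hf, h2⟩ := hxy
    rcases hf with rfl | hf
    · rw [he] at h2
      rcases Sym2.eq_iff.mp h2 with ⟨rfl, rfl⟩ | ⟨rfl, rfl⟩
      · exact Or.inr (Or.inl ⟨EqvGen.refl _, EqvGen.refl _⟩)
      · exact Or.inr (Or.inr ⟨EqvGen.refl _, EqvGen.refl _⟩)
    · exact Or.inl (EqvGen.rel _ _ ⟨f, hf, h2⟩)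
  | refl x => exact Or.inl (EqvGen.refl _)
  | symm x y _ ih =>
    rcases ih with h1 | ⟨h1, h2⟩ | ⟨h1, h2⟩
    · exact Or.inl (sy h1)
    · exact Or.inr (Or.inr ⟨sy h2, sy h1⟩)
    · exact Or.inr (Or.inl ⟨sy h2, sy h1⟩)
  | trans x y z _ _ ih1 ih2 =>
    rcases ih1 with h1 | ⟨h1, h2⟩ | ⟨h1, h2⟩ <;>
      rcases ih2 with h3 | ⟨h3, h4⟩ | ⟨h3, h4⟩
    · exact Or.inl (tr h1 h3)
    · exact Or.inr (Or.inl ⟨tr h1 h3, h4⟩)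
    · exact Or.inr (Or.inr ⟨tr h1 h3, h4⟩)
    · exact Or.inr (Or.inl ⟨h1, tr h2 h3⟩)
    · exact Or.inr (Or.inr ⟨tr h1 (sy (tr h2 h3)), tr (sy (tr h2 h3)) h4⟩)
    · exact Or.inl (tr h1 h4)
    · exact Or.inr (Or.inr ⟨h1, tr h2 h3⟩)
    · exact Or.inl (tr h1 h4)
    · exact Or.inl (tr (tr (tr h1 (sy h3)) (sy h2)) h4)

section Card

variable [Finite V]

lemma comp_le_comp_of_subset {B B' : Set E} (h : B ⊆ B') : G.comp B' ≤ G.comp B := by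
  apply Nat.card_le_card_of_surjective (Quot.map id (fun a b => rel_mono h))
  intro q
  obtain ⟨a, rfl⟩ := Quot.exists_rep q
  exact ⟨Quot.mk _ a, rfl⟩

lemma comp_le_card (B : Set E) : G.comp B ≤ Nat.card V := by
  apply Nat.card_le_card_of_surjective (Quot.mk _)
  intro q; exact Quot.exists_rep q

lemma one_le_comp [Nonempty V] (B : Set E) : 1 ≤ G.comp B := by
  have : Nonempty (Quot (G.rel B)) := ⟨Quot.mk _ (Classical.arbitrary V)⟩
  exact Nat.card_pos

variable (G) in
noncomputable def qmap (B : Set E) (e : E) :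
    Quot (G.rel B) → Quot (G.rel (insert e B)) :=
  Quot.map id (fun a b => rel_mono (Set.subset_insert e B))

lemma comp_le_comp_insert_add_one {B : Set E} {e : E} {u w : V} (he : G.ends e = s(u, w)) :
    G.comp B ≤ G.comp (insert e B) + 1 := by
  classical
  have key : ∀ a b : V, G.qmap B e (Quot.mk _ a) = G.qmap B e (Quot.mk _ b) →
      EqvGen (G.rel B) a b ∨
        (EqvGen (G.rel B) a u ∧ EqvGen (G.rel B) w b) ∨
        (EqvGen (G.rel B) a w ∧ EqvGen (G.rel B) u b) := by
    intro a b hab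
    exact eqvGen_insert he (Quot.eq.mp hab)
  haveI : Fintype (Quot (G.rel (insert e B))) := Fintype.ofFinite _
  have : G.comp B ≤ Nat.card (Option (Quot (G.rel (insert e B)))) := by
    apply Nat.card_le_card_of_injective
      (fun x => if x = Quot.mk _ u then none else some (G.qmap B e x))
    intro x y hxy
    induction x using Quot.ind with | _ a =>
    induction y using Quot.ind with | _ b =>
    by_cases hx : Quot.mk (G.rel B) a = Quot.mk _ u <;>
      by_cases hy : Quot.mk (G.rel B) b = Quot.mk _ u <;>
      simp only [hx, hy, if_pos, if_neg, if_true, if_false] at hxy ⊢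
    · simp at hxy
    · simp at hxy
    · have := key a b (by simpa using hxy)
      rcases this with h1 | ⟨h1, h2⟩ | ⟨h1, h2⟩
      · exact Quot.eq.mpr h1
      · exact absurd (Quot.eq.mpr h1) hx
      · exact absurd (Quot.eq.mpr (EqvGen.symm _ _ h2)) hy
  have hopt : Nat.card (Option (Quot (G.rel (insert e B)))) = G.comp (insert e B) + 1 := by
    simp [Nat.card_eq_fintype_card, comp]
  omega

lemma comp_insert_eq {B : Set E} {e : E} {u w : V} (he : G.ends e = s(u, w))
    (hc : EqvGen (G.rel B) u w) : G.comp (insert e B) = G.comp B := by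
  refine le_antisymm (comp_le_comp_of_subset (Set.subset_insert e B)) ?_
  apply Nat.card_le_card_of_injective (G.qmap B e)
  intro x y hxy
  induction x using Quot.ind with | _ a =>
  induction y using Quot.ind with | _ b =>
  have tr : ∀ {p q r : V}, EqvGen (G.rel B) p q → EqvGen (G.rel B) q r → EqvGen (G.rel B) p r :=
    fun h h' => EqvGen.trans _ _ _ h h'
  rcases eqvGen_insert he (Quot.eq.mp hxy) with h1 | ⟨h1, h2⟩ | ⟨h1, h2⟩
  · exact Quot.eq.mpr h1
  · exact Quot.eq.mpr (tr (tr h1 hc) h2)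
  · exact Quot.eq.mpr (tr (tr h1 (EqvGen.symm _ _ hc)) h2)

end Card


lemma comp_eq (B : Set E) : G.numComponentsEdges B = G.comp B := rfl

lemma sym2_cases (z : Sym2 V) : ∃ u w, z = s(u, w) :=
  Sym2.ind (fun u w => ⟨u, w, rfl⟩) z

lemma insert_compl_insert {B : Set E} {e : E} (he : e ∉ B) :
    insert e ((insert e B)ᶜ) = Bᶜ := by
  ext f
  simp only [Set.mem_insert_iff, Set.mem_compl_iff]
  by_cases hf : f = e
  · subst hf; simp [he]
  · simp [hf]

section Gfun

variable [Finite V] [Finite E]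

variable (G) in
noncomputable def gfun (B : Set E) : ℕ := B.ncard + (Nat.card V - G.comp Bᶜ)

lemma nonempty_of_conn (hconn : G.numComponentsEdges Set.univ = 1) : Nonempty V := by
  have h : 0 < Nat.card (Quot (fun u v : V => ∃ e ∈ (Set.univ : Set E), G.ends e = s(u, v))) := by
    rw [show Nat.card (Quot (fun u v : V => ∃ e ∈ (Set.univ : Set E), G.ends e = s(u, v)))
      = G.numComponentsEdges Set.univ from rfl, hconn]; norm_num
  obtain ⟨q⟩ := (Nat.card_pos_iff.mp h).1
  obtain ⟨a, -⟩ := Quot.exists_rep q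
  exact ⟨a⟩

lemma gfun_insert_bounds [Nonempty V] {B : Set E} {e : E} (he : e ∉ B) :
    G.gfun B ≤ G.gfun (insert e B) ∧ G.gfun (insert e B) ≤ G.gfun B + 1 := by
  obtain ⟨u, w, hew⟩ := sym2_cases (G.ends e)
  have h1 : G.comp ((insert e B)ᶜ) ≤ G.comp (insert e ((insert e B)ᶜ)) + 1 :=
    comp_le_comp_insert_add_one hew
  rw [insert_compl_insert he] at h1
  have h2 : G.comp (Bᶜ) ≤ G.comp ((insert e B)ᶜ) :=
    comp_le_comp_of_subset (Set.compl_subset_compl.mpr (Set.subset_insert e B))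
  have h3 : G.comp (Bᶜ) ≤ Nat.card V := comp_le_card _
  have h4 : G.comp ((insert e B)ᶜ) ≤ Nat.card V := comp_le_card _
  have h5 : 1 ≤ G.comp (Bᶜ) := one_le_comp _
  have h6 : (insert e B).ncard = B.ncard + 1 := Set.ncard_insert_of_notMem he (Set.toFinite _)
  unfold gfun
  omega

lemma gfun_mono [Nonempty V] {S T : Set E} (h : S ⊆ T) : G.gfun S ≤ G.gfun T := by
  have key : ∀ (k : ℕ) (S T : Set E), S ⊆ T → (T \ S).ncard = k → G.gfun S ≤ G.gfun T := by
    intro k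
    induction k with
    | zero =>
      intro S T hST h0
      have hTS : T \ S = ∅ := (Set.ncard_eq_zero (Set.toFinite _)).mp h0
      have : S = T := Set.Subset.antisymm hST (fun x hx => by
        by_contra hxS
        exact absurd (Set.mem_diff_of_mem hx hxS) (by rw [hTS]; exact Set.notMem_empty x))
      rw [this]
    | succ k ih =>
      intro S T hST h0
      obtain ⟨e, he⟩ : (T \ S).Nonempty := Set.nonempty_of_ncard_ne_zero (by omega)
      have hsub : insert e S ⊆ T := Set.insert_subset he.1 hST
      have hd : T \ insert e S = (T \ S) \ {e} := by
        ext x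
        simp only [Set.mem_diff, Set.mem_insert_iff, Set.mem_singleton_iff]
        tauto
      have hk : (T \ insert e S).ncard = k := by
        have := Set.ncard_diff_singleton_add_one he (Set.toFinite _)
        rw [hd]; omega
      exact le_trans (gfun_insert_bounds he.2).1 (ih _ _ hsub hk)
  exact key _ S T h rfl

lemma gfun_ge (hconn : G.numComponentsEdges Set.univ = 1) (B : Set E) :
    Nat.card V - 1 ≤ G.gfun B := by
  haveI : Nonempty V := nonempty_of_conn hconn
  have h0 : G.gfun ∅ = Nat.card V - 1 := by
    unfold gfun
    rw [Set.compl_empty, Set.ncard_empty, ← comp_eq, hconn]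
    omega
  rw [← h0]
  exact gfun_mono (Set.empty_subset B)

lemma bondRank_eq_gfun (hconn : G.numComponentsEdges Set.univ = 1) (B : Set E) :
    G.bondRank B = G.gfun B - (Nat.card V - 1) := by
  unfold bondRank cycleRank gfun
  rw [hconn, comp_eq]

lemma bondRank_mono (hconn : G.numComponentsEdges Set.univ = 1) {S T : Set E} (h : S ⊆ T) :
    G.bondRank S ≤ G.bondRank T := by
  haveI : Nonempty V := nonempty_of_conn hconn
  rw [bondRank_eq_gfun hconn, bondRank_eq_gfun hconn]
  exact Nat.sub_le_sub_right (gfun_mono h) _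

open Relation in
lemma bondRank_insert_eq (hconn : G.numComponentsEdges Set.univ = 1) {S : Set E} {e : E}
    {u w : V} (heS : e ∉ S) (he : G.ends e = s(u, w))
    (hcon : EqvGen (G.rel ((insert e S)ᶜ)) u w) :
    G.bondRank (insert e S) = G.bondRank S + 1 := by
  haveI : Nonempty V := nonempty_of_conn hconn
  have hci : G.comp (insert e ((insert e S)ᶜ)) = G.comp ((insert e S)ᶜ) :=
    comp_insert_eq he hcon
  rw [insert_compl_insert heS] at hci
  have h6 : (insert e S).ncard = S.ncard + 1 := Set.ncard_insert_of_notMem heS (Set.toFinite _)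
  have hg : G.gfun (insert e S) = G.gfun S + 1 := by
    unfold gfun
    rw [h6, hci]
    omega
  have hge := gfun_ge hconn S
  rw [bondRank_eq_gfun hconn, bondRank_eq_gfun hconn, hg]
  omega

end Gfun

open Relation in
lemma cycle_connects {n : ℕ} (hn : 0 < n) (f : ZMod n → V) (ed : ZMod n → E)
    (hends : ∀ i, G.ends (ed i) = s(f i, f (i + 1))) (B : Set E) (i₀ : ZMod n)
    (hB : ∀ i, i ≠ i₀ → ed i ∈ B) :
    EqvGen (G.rel B) (f (i₀ + 1)) (f i₀) := by
  haveI : NeZero n := ⟨hn.ne'⟩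
  have key : ∀ k : ℕ, k ≤ n - 1 → EqvGen (G.rel B) (f (i₀ + 1)) (f (i₀ + 1 + (k : ZMod n))) := by
    intro k
    induction k with
    | zero => intro _; simpa using EqvGen.refl _
    | succ k ih =>
      intro hk
      have h1 := ih (by omega)
      have hne : (i₀ + 1 + (k : ZMod n)) ≠ i₀ := by
        intro hcontra
        have : ((1 + k : ℕ) : ZMod n) = 0 := by
          push_cast
          linear_combination hcontra
        rw [ZMod.natCast_eq_zero_iff] at this
        have := Nat.le_of_dvd (by omega) this
        omega
      have hstep : G.rel B (f (i₀ + 1 + (k : ZMod n))) (f (i₀ + 1 + (k : ZMod n) + 1)) :=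
        ⟨ed (i₀ + 1 + (k : ZMod n)), hB _ hne, hends _⟩
      have := EqvGen.trans _ _ _ h1 (EqvGen.rel _ _ hstep)
      have hcast : (((k + 1 : ℕ)) : ZMod n) = (k : ZMod n) + 1 := by push_cast; ring
      rw [hcast, ← add_assoc]
      exact this
  have h := key (n - 1) le_rfl
  have hcast : ((n - 1 : ℕ) : ZMod n) = -1 := by
    have : ((n : ℕ) : ZMod n) = 0 := ZMod.natCast_self n
    rw [Nat.cast_sub hn, this, Nat.cast_one]
    ring
  rw [hcast] at h
  have : i₀ + 1 + (-1) = i₀ := by ring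
  rwa [this] at h

section Vertex

open Relation

variable [Finite V] [Fintype E]

lemma eqv_of_comp_one {B : Set E} (h : G.comp B = 1) (a b : V) : EqvGen (G.rel B) a b := by
  have : Subsingleton (Quot (G.rel B)) := (Nat.card_eq_one_iff_unique.mp h).1
  exact Quot.eq.mp (Subsingleton.elim _ _)

lemma closed_iff {B : Set E} {X : Set V} (h : ∀ a b, G.rel B a b → a ∈ X → b ∈ X) :
    ∀ ⦃a b⦄, G.rel B a b → (a ∈ X ↔ b ∈ X) :=
  fun a b hr => ⟨h a b hr, h b a (rel_symm hr)⟩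

lemma mem_inc_singleton {v : V} {e : E} : e ∈ G.inc {v} ↔ v ∈ G.ends e := by
  simp [inc]

lemma no_loop_at {v : V} (hconn : G.numComponentsEdges Set.univ = 1)
    (hbr : ∀ e : E, G.numComponentsEdges {e}ᶜ = 1)
    (hdeg : G.degree v = 3) : ∀ e, G.ends e ≠ s(v, v) := by
  classical
  intro ℓ hℓ
  set w : E → ℕ := fun e => if G.ends e = s(v, v) then 2 else if v ∈ G.ends e then 1 else 0 with hw
  have hd : G.degree v = ∑ e : E, w e := by
    unfold degree
    apply Finset.sum_congr rfl
    intro e _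
    simp only [hw]
  have hsplit : ∑ e : E, w e = ∑ e ∈ Finset.univ \ {ℓ}, w e + w ℓ :=
    Finset.sum_eq_sum_sdiff_singleton_add (Finset.mem_univ ℓ) w
  have hwl : w ℓ = 2 := by simp [hw, hℓ]
  have hsum : ∑ e ∈ Finset.univ \ {ℓ}, w e = 1 := by
    rw [hdeg] at hd; omega
  set T : Finset E := (Finset.univ \ {ℓ}).filter (fun e => v ∈ G.ends e) with hT
  have hT1 : T.card ≤ 1 := by
    have h1 : T.card = ∑ e ∈ Finset.univ \ {ℓ}, (if v ∈ G.ends e then 1 else 0) :=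
      Finset.card_filter _ _
    have h2 : ∀ e ∈ Finset.univ \ {ℓ}, (if v ∈ G.ends e then 1 else 0) ≤ w e := by
      intro e _
      simp only [hw]
      split_ifs with h3 h4 <;> omega
    calc T.card = _ := h1
      _ ≤ ∑ e ∈ Finset.univ \ {ℓ}, w e := Finset.sum_le_sum h2
      _ ≤ 1 := hsum.le
  rcases Finset.eq_empty_or_nonempty T with hTe | ⟨e₀, he₀⟩
  · -- no other edge at v: V = {v}, all edges loops at v, contradiction with sum
    have hclosed : ∀ a b, G.rel Set.univ a b → a ∈ ({v} : Set V) → b ∈ ({v} : Set V) := by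
      intro a b ⟨f, _, hf⟩ ha
      rcases Set.eq_of_mem_singleton ha with rfl
      by_cases hfl : f = ℓ
      · subst hfl
        rw [hℓ] at hf
        rcases Sym2.eq_iff.mp hf.symm with ⟨_, h'⟩ | ⟨_, h'⟩ <;>
          simp [h']
      · exfalso
        have : f ∈ T := by
          rw [hT, Finset.mem_filter]
          refine ⟨by simp [hfl], ?_⟩
          rw [hf]; exact Sym2.mem_iff.mpr (Or.inl rfl)
        rw [hTe] at this
        exact absurd this (Finset.notMem_empty f)
    have hall : ∀ y : V, y = v := by
      intro y
      have := eqvGen_closed (closed_iff hclosed) (eqv_of_comp_one ((comp_eq _).symm.trans hconn) v y)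
      exact (this.mp rfl :)
    -- every edge is a loop at v
    have hloopall : ∀ e : E, G.ends e = s(v, v) := by
      intro e
      obtain ⟨x, y, hxy⟩ := sym2_cases (G.ends e)
      rw [hxy, hall x, hall y]
    rcases Finset.eq_empty_or_nonempty (Finset.univ \ {ℓ} : Finset E) with hde | ⟨e', he'⟩
    · rw [hde, Finset.sum_empty] at hsum; omega
    · have : w e' = 2 := by simp [hw, hloopall e']
      have := Finset.single_le_sum (fun e _ => Nat.zero_le (w e)) he'
      omega
  · -- T nonempty: T = {e₀}
    have he₀T := he₀
    rw [hT, Finset.mem_filter, Finset.mem_sdiff, Finset.mem_singleton] at he₀T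
    obtain ⟨⟨_, he₀ℓ⟩, hve₀⟩ := he₀T
    by_cases hloop : G.ends e₀ = s(v, v)
    · have h1 : w e₀ = 2 := by simp [hw, hloop]
      have h2 : e₀ ∈ Finset.univ \ {ℓ} := by simp [he₀ℓ]
      have := Finset.single_le_sum (fun e (_ : e ∈ Finset.univ \ {ℓ}) => Nat.zero_le (w e)) h2
      omega
    obtain ⟨u, hu⟩ := Sym2.mem_iff_exists.mp hve₀
    have huv : u ≠ v := fun h => hloop (by rw [hu, h])
    have hclosed : ∀ a b, G.rel {e₀}ᶜ a b → a ∈ ({v} : Set V) → b ∈ ({v} : Set V) := by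
      intro a b ⟨f, hfmem, hf⟩ ha
      rcases Set.eq_of_mem_singleton ha with rfl
      have hfe₀ : f ≠ e₀ := hfmem
      by_cases hfl : f = ℓ
      · subst hfl
        rw [hℓ] at hf
        rcases Sym2.eq_iff.mp hf.symm with ⟨_, h'⟩ | ⟨_, h'⟩ <;>
          simp [h']
      · exfalso
        have : f ∈ T := by
          rw [hT, Finset.mem_filter]
          refine ⟨by simp [hfl], ?_⟩
          rw [hf]; exact Sym2.mem_iff.mpr (Or.inl rfl)
        have hT0 : T = {e₀} := Finset.eq_singleton_iff_unique_mem.mpr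
          ⟨he₀, fun x hx => by
            have := Finset.card_le_one.mp hT1
            exact this x hx e₀ he₀⟩
        rw [hT0, Finset.mem_singleton] at this
        exact hfe₀ this
    have hvu : EqvGen (G.rel {e₀}ᶜ) v u :=
      eqv_of_comp_one ((comp_eq _).symm.trans (hbr e₀)) v u
    have := (eqvGen_closed (closed_iff hclosed) hvu).mp rfl
    exact huv this

lemma ncard_inc_singleton {v : V} (hnl : ∀ e, G.ends e ≠ s(v, v)) (hdeg : G.degree v = 3) :
    (G.inc {v}).ncard = 3 := by
  classical
  have hset : G.inc {v} = ↑(Finset.univ.filter (fun e => v ∈ G.ends e)) := by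
    ext e; simp [inc]
  rw [hset, Set.ncard_coe_finset]
  have h1 : (Finset.univ.filter (fun e => v ∈ G.ends e)).card
      = ∑ e : E, (if v ∈ G.ends e then 1 else 0) := Finset.card_filter _ _
  have h2 : G.degree v = ∑ e : E, (if v ∈ G.ends e then 1 else 0) := by
    unfold degree
    apply Finset.sum_congr rfl
    intro e _
    rw [if_neg (hnl e)]
  omega

open Relation in
lemma bridge_absurd {v : V} (hbr : ∀ e : E, G.numComponentsEdges {e}ᶜ = 1)
    {q : Quot (G.rel ((G.inc {v})ᶜ))} (hq : q ≠ Quot.mk _ v) {e₀ : E}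
    (ht : {f : E | ∃ u, G.ends f = s(v, u) ∧ Quot.mk (G.rel ((G.inc {v})ᶜ)) u = q} = {e₀}) :
    False := by
  have he₀ : ∃ u, G.ends e₀ = s(v, u) ∧ Quot.mk (G.rel ((G.inc {v})ᶜ)) u = q := by
    rw [show (∃ u, G.ends e₀ = s(v, u) ∧ Quot.mk (G.rel ((G.inc {v})ᶜ)) u = q)
      = (e₀ ∈ {f : E | ∃ u, G.ends f = s(v, u) ∧ Quot.mk (G.rel ((G.inc {v})ᶜ)) u = q}) from rfl,
      ht]
    rfl
  obtain ⟨u₀, hu₀, hqu₀⟩ := he₀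
  set X : Set V := {y | Quot.mk (G.rel ((G.inc {v})ᶜ)) y = q} with hX
  have hvX : v ∉ X := fun h => hq (Eq.symm h)
  have hclosed : ∀ a b, G.rel {e₀}ᶜ a b → a ∈ X → b ∈ X := by
    rintro a b ⟨f, hfmem, hf⟩ ha
    have hfe₀ : f ≠ e₀ := hfmem
    by_cases hvf : v ∈ G.ends f
    · exfalso
      have hav : a ≠ v := fun h => hvX (h ▸ ha)
      have hbv : b = v := by
        rw [hf] at hvf
        rcases Sym2.mem_iff.mp hvf with h | h
        · exact absurd h.symm hav
        · exact h.symm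
      apply hfe₀
      have : f ∈ {f : E | ∃ u, G.ends f = s(v, u) ∧ Quot.mk (G.rel ((G.inc {v})ᶜ)) u = q} := by
        refine ⟨a, ?_, ha⟩
        rw [hf, hbv, Sym2.eq_swap]
      rwa [ht] at this
    · have hfi : f ∈ (G.inc {v})ᶜ := by
        rw [Set.mem_compl_iff, mem_inc_singleton]
        exact hvf
      have : Quot.mk (G.rel ((G.inc {v})ᶜ)) a = Quot.mk (G.rel ((G.inc {v})ᶜ)) b :=
        Quot.sound ⟨f, hfi, hf⟩
      rw [hX, Set.mem_setOf_eq] at ha ⊢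
      rw [← this]
      exact ha
  have hvu : EqvGen (G.rel {e₀}ᶜ) u₀ v :=
    eqv_of_comp_one ((comp_eq _).symm.trans (hbr e₀)) u₀ v
  exact hvX ((eqvGen_closed (closed_iff hclosed) hvu).mp hqu₀)

open Relation in
lemma comp_inc_singleton_le_two {v : V} (hconn : G.numComponentsEdges Set.univ = 1)
    (hbr : ∀ e : E, G.numComponentsEdges {e}ᶜ = 1)
    (hnl : ∀ e, G.ends e ≠ s(v, v)) (hdeg : G.degree v = 3) :
    G.comp ((G.inc {v})ᶜ) ≤ 2 := by
  classical
  by_contra hc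
  push_neg at hc
  set B₀ : Set E := (G.inc {v})ᶜ with hB₀
  haveI : Fintype (Quot (G.rel B₀)) := Fintype.ofFinite _
  have hcard : 3 ≤ Fintype.card (Quot (G.rel B₀)) := by
    have : G.comp B₀ = Fintype.card (Quot (G.rel B₀)) := Nat.card_eq_fintype_card
    omega
  have herase : 1 < ((Finset.univ : Finset (Quot (G.rel B₀))).erase
      (Quot.mk (G.rel B₀) v)).card := by
    have := Finset.card_erase_of_mem (Finset.mem_univ (Quot.mk (G.rel B₀) v))
    rw [this, Finset.card_univ]
    omega
  obtain ⟨q₁, hq₁, q₂, hq₂, hq12⟩ := Finset.one_lt_card.mp herase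
  have hq₁v : q₁ ≠ Quot.mk (G.rel B₀) v := Finset.ne_of_mem_erase hq₁
  have hq₂v : q₂ ≠ Quot.mk (G.rel B₀) v := Finset.ne_of_mem_erase hq₂
  -- every class other than that of v is hit by an edge at v
  have claim : ∀ q : Quot (G.rel B₀), q ≠ Quot.mk (G.rel B₀) v →
      ∃ e u, G.ends e = s(v, u) ∧ Quot.mk (G.rel B₀) u = q := by
    intro q hq
    by_contra hno
    push_neg at hno
    set X : Set V := {y | Quot.mk (G.rel B₀) y = q} with hX
    have hvX : v ∉ X := fun h => hq (Eq.symm h)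
    have hclosed : ∀ a b, G.rel Set.univ a b → a ∈ X → b ∈ X := by
      rintro a b ⟨f, -, hf⟩ ha
      by_cases hvf : v ∈ G.ends f
      · exfalso
        have hav : a ≠ v := fun h => hvX (h ▸ ha)
        have hbv : b = v := by
          rw [hf] at hvf
          rcases Sym2.mem_iff.mp hvf with h | h
          · exact absurd h.symm hav
          · exact h.symm
        exact hno f a (by rw [hf, hbv, Sym2.eq_swap]) ha
      · have hfi : f ∈ B₀ := by
          rw [hB₀, Set.mem_compl_iff, mem_inc_singleton]
          exact hvf
        have : Quot.mk (G.rel B₀) a = Quot.mk (G.rel B₀) b := Quot.sound ⟨f, hfi, hf⟩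
        rw [hX, Set.mem_setOf_eq] at ha ⊢
        rw [← this]
        exact ha
    obtain ⟨x, hxq⟩ := Quot.exists_rep q
    have hxX : x ∈ X := hxq
    have hxv : EqvGen (G.rel Set.univ) x v :=
      eqv_of_comp_one ((comp_eq _).symm.trans hconn) x v
    exact hvX ((eqvGen_closed (closed_iff hclosed) hxv).mp hxX)
  set t : Quot (G.rel B₀) → Set E :=
    fun q => {f : E | ∃ u, G.ends f = s(v, u) ∧ Quot.mk (G.rel B₀) u = q} with htdef
  have htsub : ∀ q, t q ⊆ G.inc {v} := by
    rintro q f ⟨u, hu, -⟩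
    rw [mem_inc_singleton, hu]
    exact Sym2.mem_iff.mpr (Or.inl rfl)
  have htne : ∀ q, q ≠ Quot.mk (G.rel B₀) v → (t q).Nonempty := by
    intro q hq
    obtain ⟨e, u, hu, hque⟩ := claim q hq
    exact ⟨e, u, hu, hque⟩
  have hdisj : Disjoint (t q₁) (t q₂) := by
    rw [Set.disjoint_left]
    rintro f ⟨u, hu, hqu⟩ ⟨u', hu', hqu'⟩
    rw [hu] at hu'
    rcases Sym2.eq_iff.mp hu' with ⟨-, rfl⟩ | ⟨hv1, hv2⟩
    · exact hq12 (hqu ▸ hqu')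
    · exact hq₁v (by rw [← hqu, hv2])
  have hcard3 : (t q₁).ncard + (t q₂).ncard ≤ 3 := by
    have := Set.ncard_union_eq hdisj (Set.toFinite _) (Set.toFinite _)
    have hsub : t q₁ ∪ t q₂ ⊆ G.inc {v} := Set.union_subset (htsub q₁) (htsub q₂)
    have hle := Set.ncard_le_ncard hsub (Set.toFinite _)
    rw [ncard_inc_singleton hnl hdeg] at hle
    omega
  have h1 : 1 ≤ (t q₁).ncard := by
    rw [Nat.one_le_iff_ne_zero]
    intro h0
    exact absurd ((Set.ncard_eq_zero (Set.toFinite _)).mp h0 ▸ (htne q₁ hq₁v)) (by simp)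
  have h2 : 1 ≤ (t q₂).ncard := by
    rw [Nat.one_le_iff_ne_zero]
    intro h0
    exact absurd ((Set.ncard_eq_zero (Set.toFinite _)).mp h0 ▸ (htne q₂ hq₂v)) (by simp)
  have hone : (t q₁).ncard = 1 ∨ (t q₂).ncard = 1 := by omega
  rcases hone with h | h
  · obtain ⟨e₀, he₀⟩ := Set.ncard_eq_one.mp h
    exact bridge_absurd hbr hq₁v he₀
  · obtain ⟨e₀, he₀⟩ := Set.ncard_eq_one.mp h
    exact bridge_absurd hbr hq₂v he₀

lemma two_le_bondRank_inc_singleton {v : V} (hconn : G.numComponentsEdges Set.univ = 1)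
    (hbr : ∀ e : E, G.numComponentsEdges {e}ᶜ = 1) (hdeg : G.degree v = 3) :
    2 ≤ G.bondRank (G.inc {v}) := by
  have hnl := no_loop_at hconn hbr hdeg
  have hc2 := comp_inc_singleton_le_two hconn hbr hnl hdeg
  haveI : Nonempty V := nonempty_of_conn hconn
  have hc1 : 1 ≤ G.comp ((G.inc {v})ᶜ) := one_le_comp _
  have hcn : G.comp ((G.inc {v})ᶜ) ≤ Nat.card V := comp_le_card _
  have hn3 := ncard_inc_singleton hnl hdeg
  rw [bondRank_eq_gfun hconn]
  unfold gfun
  rw [hn3]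
  omega

end Vertex


section Core

open Relation

variable [Finite V] [Fintype E]

lemma no_circuit_core (h3 : G.Trivalent) (h2 : G.TwoEdgeConnected)
    {A : Set V} {v : V} {C : Set V} (hCA : C ⊆ Aᶜ) (hcyc : G.IsCycleSet C) (hvC : v ∈ C)
    {D : Set V} (hD : G.IsCircuitMG D) (hDsub : D ⊆ insert v A) (hvD : v ∈ D) : False := by
  obtain ⟨hconn, hbr⟩ := h2
  have hconn' : G.numComponentsEdges Set.univ = 1 := hconn
  haveI : Nonempty V := nonempty_of_conn hconn'
  by_cases hDv : D = {v}
  · have h1 : G.bondRank (G.inc D) ≤ D.ncard := hD.2.1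
    rw [hDv, Set.ncard_singleton] at h1
    have := two_le_bondRank_inc_singleton hconn' hbr (h3 v)
    omega
  · have hDne : (D \ {v}).Nonempty := by
      by_contra hne
      rw [Set.not_nonempty_iff_eq_empty, Set.diff_eq_empty] at hne
      exact hDv (Set.Subset.antisymm hne (Set.singleton_subset_iff.mpr hvD))
    set S := G.inc (D \ {v}) with hS
    have hDvA : D \ {v} ⊆ A := by
      intro x hx
      rcases Set.mem_insert_iff.mp (hDsub hx.1) with h | h
      · exact absurd h hx.2
      · exact h
    obtain ⟨n, hn, f, finj, frange, ed, edinj, hends⟩ := hcyc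
    obtain ⟨i₀, hi₀⟩ : ∃ i₀, f i₀ = v := by rwa [← frange] at hvC
    have hce₀ : G.ends (ed i₀) = s(v, f (i₀ + 1)) := by rw [hends, hi₀]
    have he₀S : ed i₀ ∉ S := by
      rintro ⟨x, hxD, hxe⟩
      rw [hce₀] at hxe
      rcases Sym2.mem_iff.mp hxe with rfl | hxu
      · exact hxD.2 rfl
      · have hxC : x ∈ C := by rw [hxu, ← frange]; exact Set.mem_range_self _
        exact (hCA hxC) (hDvA hxD)
    have hBall : ∀ i, i ≠ i₀ → ed i ∈ (insert (ed i₀) S)ᶜ := by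
      intro i hi
      rw [Set.mem_compl_iff, Set.mem_insert_iff]
      push_neg
      refine ⟨fun h => hi (edinj h), ?_⟩
      rintro ⟨x, hxD, hxe⟩
      rw [hends] at hxe
      have hxC : x ∈ C := by
        rcases Sym2.mem_iff.mp hxe with h | h <;> rw [h, ← frange]
        · exact Set.mem_range_self _
        · exact Set.mem_range_self _
      exact (hCA hxC) (hDvA hxD)
    have hwalk : EqvGen (G.rel ((insert (ed i₀) S)ᶜ)) (f (i₀ + 1)) (f i₀) :=
      cycle_connects hn f ed hends _ i₀ hBall
    rw [hi₀] at hwalk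
    have hstep : G.bondRank (insert (ed i₀) S) = G.bondRank S + 1 :=
      bondRank_insert_eq hconn' he₀S hce₀ (EqvGen.symm _ _ hwalk)
    have hsub2 : insert (ed i₀) S ⊆ G.inc D := by
      intro g hg
      rcases Set.mem_insert_iff.mp hg with rfl | hgS
      · exact ⟨v, hvD, by rw [hce₀]; exact Sym2.mem_iff.mpr (Or.inl rfl)⟩
      · obtain ⟨x, hxD, hxe⟩ := hgS
        exact ⟨x, hxD.1, hxe⟩
    have hmono := bondRank_mono hconn' hsub2
    have h1 : G.bondRank (G.inc D) ≤ D.ncard := hD.2.1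
    have hss : D \ {v} ⊂ D := ⟨Set.diff_subset, fun hsub => (hsub hvD).2 rfl⟩
    have h2' : (D \ {v}).ncard < G.bondRank S := hD.2.2 _ hss hDne
    have hcard : (D \ {v}).ncard + 1 = D.ncard :=
      Set.ncard_diff_singleton_add_one hvD (Set.toFinite _)
    omega

lemma indepMG_empty : G.IndepMG ∅ := by
  rintro ⟨Cir, hCir, hc⟩
  obtain ⟨x, hx⟩ := hc.1
  exact absurd (hCir hx) (Set.notMem_empty x)

lemma rank_bddAbove (A : Set V) :
    BddAbove {n | ∃ I ⊆ A, G.IndepMG I ∧ I.ncard = n} := by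
  refine ⟨Nat.card V, ?_⟩
  rintro n ⟨I, -, -, rfl⟩
  rw [← Set.ncard_univ]
  exact Set.ncard_le_ncard (Set.subset_univ I) (Set.toFinite _)

lemma rank_mem_nonempty (A : Set V) :
    Set.Nonempty {n | ∃ I ⊆ A, G.IndepMG I ∧ I.ncard = n} :=
  ⟨0, ∅, Set.empty_subset A, indepMG_empty, Set.ncard_empty V⟩

lemma exists_max_indep (A : Set V) :
    ∃ I ⊆ A, G.IndepMG I ∧ I.ncard = G.rankMG A :=
  Nat.sSup_mem (rank_mem_nonempty A) (rank_bddAbove A)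

lemma ncard_le_rank {I A : Set V} (hIA : I ⊆ A) (hI : G.IndepMG I) :
    I.ncard ≤ G.rankMG A :=
  le_csSup (rank_bddAbove A) ⟨I, hIA, hI, rfl⟩

lemma rank_lt_insert (h3 : G.Trivalent) (h2 : G.TwoEdgeConnected)
    {A : Set V} {v : V} (hvA : v ∉ A)
    (hcyc : ∃ C ⊆ Aᶜ, G.IsCycleSet C ∧ v ∈ C) :
    G.rankMG A < G.rankMG (A ∪ {v}) := by
  obtain ⟨C, hCA, hcycC, hvC⟩ := hcyc
  obtain ⟨I, hIA, hI, hIr⟩ := exists_max_indep (G := G) A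
  have hvI : v ∉ I := fun h => hvA (hIA h)
  have hJ : G.IndepMG (insert v I) := by
    rintro ⟨D, hDsub, hD⟩
    by_cases hvD : v ∈ D
    · exact no_circuit_core h3 h2 hCA hcycC hvC hD
        (hDsub.trans (Set.insert_subset_insert hIA)) hvD
    · exact hI ⟨D, fun x hx => (hDsub hx).resolve_left (fun h => hvD (h ▸ hx)), hD⟩
  have hJc : (insert v I).ncard = G.rankMG A + 1 := by
    rw [Set.ncard_insert_of_notMem hvI (Set.toFinite _), hIr]
  have hle : (insert v I).ncard ≤ G.rankMG (A ∪ {v}) := by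
    apply ncard_le_rank _ hJ
    rw [Set.union_singleton]
    exact Set.insert_subset_insert hIA
  omega

lemma basis_acyclic (h3 : G.Trivalent) (h2 : G.TwoEdgeConnected)
    {B : Set V} (hB : G.IsBasisMG B) : G.Acyclic Bᶜ := by
  rintro ⟨C, hCB, hcycC⟩
  obtain ⟨n, hn, f, finj, frange, rest⟩ := hcycC
  haveI : NeZero n := ⟨hn.ne'⟩
  set v := f 0 with hv
  have hvC : v ∈ C := by rw [← frange]; exact Set.mem_range_self _
  have hvB : v ∉ B := hCB hvC
  have hlt : G.rankMG B < G.rankMG (B ∪ {v}) :=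
    rank_lt_insert h3 h2 hvB ⟨C, hCB, ⟨n, hn, f, finj, frange, rest⟩, hvC⟩
  have hrB : G.rankMG B = B.ncard := by
    apply le_antisymm
    · apply csSup_le (rank_mem_nonempty B)
      rintro m ⟨I, hIB, -, rfl⟩
      exact Set.ncard_le_ncard hIB (Set.toFinite _)
    · exact ncard_le_rank Set.Subset.rfl hB.1
  obtain ⟨I, hIsub, hIind, hIr⟩ := exists_max_indep (G := G) (B ∪ {v})
  rw [Set.union_singleton] at hIsub
  have hins : (insert v B).ncard = B.ncard + 1 :=
    Set.ncard_insert_of_notMem hvB (Set.toFinite _)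
  have hI1 : (insert v B).ncard ≤ I.ncard := by
    rw [hins, hIr]
    omega
  have hIeq : I = insert v B := Set.eq_of_subset_of_ncard_le hIsub hI1 (Set.toFinite _)
  have hBI : B ⊆ I := by rw [hIeq]; exact Set.subset_insert v B
  have := hB.2 I hIind hBI
  rw [hIeq] at this
  exact hvB (this ▸ Set.mem_insert v B)

end Core

end Multigraph

/-- Let `G` be trivalent and 2-edge-connected, `A ⊆ V`, and
`v ∈ V - A` a vertex lying on a cycle of `G[V-A]`. Then
`r_{M_G}(A ∪ {v}) > r_{M_G}(A)`. Consequently, the complement of any basis of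
`M_G` induces an acyclic subgraph. -/
theorem rankMG_insert_of_mem_cycle {V E : Type*} [Fintype V] [Fintype E]
    (G : Multigraph V E) (h3 : G.Trivalent) (h2 : G.TwoEdgeConnected) :
    (∀ (A : Set V) (v : V), v ∉ A →
      (∃ C ⊆ Aᶜ, G.IsCycleSet C ∧ v ∈ C) →
      G.rankMG A < G.rankMG (A ∪ {v})) ∧
    (∀ B : Set V, G.IsBasisMG B → G.Acyclic Bᶜ) := by
  exact ⟨fun A v hvA hcyc => Multigraph.rank_lt_insert h3 h2 hvA hcyc,
    fun B hB => Multigraph.basis_acyclic h3 h2 hB⟩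
end
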